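/- arXiv:2310.15953 — 3 statements merged into one kernel-verified Lean document; each statement's English description precedes it below -/
import Mathlib

section
/- Let Γ be a RAACH with generating set S and associated pair (H*,w), and let G = Cay(Γ,S). Let S₁ = S* be the 1-sphere around the identity e in G and S₂ the 2-sphere. Let Δ_{S₁} be the Laplacian (vertex measure ≡ 1, unit edge weights) of the subgraph of G induced on S₁, and let Δ_{S₁'} be the weighted Laplacian on vertex set S₁ with vertex measure ≡ 1 and edge weights w'(u,v) = Σ_{z ∈ S₂, z ∼ u, z ∼ v} 1/d_z⁻ for u ≠ v, where d_z⁻ = |{y ∈ S₁ : y ∼ z}|. Then, as matrices indexed by S*, the weighted Laplacian Δ_{H*} of (H*,w) with vertex measure ≡ 1 satisfies Δ_{H*} = 2Δ_{S₁} + 2Δ_{S₁'}. -/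
set_option linter.unusedVariables false

attribute [local instance] Classical.propDecidable

/-- The Cayley graph of a group `G` with respect to a connecting set `T`
(assumed closed under inversion, e.g. a symmetrized generating set). -/
def cayley (G : Type*) [Group G] (T : Set G) : SimpleGraph G where
  Adj x y := x ≠ y ∧ (x⁻¹ * y ∈ T ∨ y⁻¹ * x ∈ T)
  symm := ⟨fun x y h => ⟨h.1.symm, h.2.symm⟩⟩
  loopless := ⟨fun x h => h.1 rfl⟩

open scoped commutatorElement

/-- The defining relators of a Right Angled Artin-Coxeter Hybrid: `s ^ (m s) = 1` for every
generator `s` with finite order prescription `m s`, and commutators for edges of `H`. -/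
def raachRels {S : Type*} (H : SimpleGraph S) (m : S → ℕ∞) : Set (FreeGroup S) :=
  {r | ∃ (s : S) (k : ℕ), m s = (k : ℕ∞) ∧ r = FreeGroup.of s ^ k} ∪
  {r | ∃ s t : S, H.Adj s t ∧ r = ⁅FreeGroup.of s, FreeGroup.of t⁆}

/-- The Right Angled Artin-Coxeter Hybrid with defining graph `(H, m)`. -/
abbrev RAACH {S : Type*} (H : SimpleGraph S) (m : S → ℕ∞) : Type _ :=
  PresentedGroup (raachRels H m)

/-- The generator of a RAACH corresponding to `s : S`. -/
def raachGen {S : Type*} (H : SimpleGraph S) (m : S → ℕ∞) (s : S) : RAACH H m :=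
  PresentedGroup.of s

/-- The symmetrized generating set `S* = {s, s⁻¹ | s ∈ S}` inside the RAACH. -/
def Sstar {S : Type*} (H : SimpleGraph S) (m : S → ℕ∞) : Set (RAACH H m) :=
  {g | ∃ s : S, g = raachGen H m s ∨ g = (raachGen H m s)⁻¹}

/-- The Cayley graph `Cay(Γ, S)` of the RAACH `Γ` with defining graph `(H, m)`. -/
def cayRAACH {S : Type*} (H : SimpleGraph S) (m : S → ℕ∞) : SimpleGraph (RAACH H m) :=
  cayley (RAACH H m) (Sstar H m)

/-- The edge weight function of the associated pair `(H*, w)` of a RAACH: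
`w(s,t) = 1` if `s`, `t` commute and `t ∉ {s, s⁻¹}`; `w(s, s⁻¹) = 1` if `ord(s) = 4`;
`w(s, s⁻¹) = 2` if `ord(s) = 3`; and `w(s,t) = 0` otherwise. -/
noncomputable def apWeight {S : Type*} (H : SimpleGraph S) (m : S → ℕ∞)
    (s t : RAACH H m) : ℕ :=
  if Commute s t ∧ t ≠ s ∧ t ≠ s⁻¹ then 1
  else if t = s⁻¹ ∧ orderOf s = 4 then 1
  else if t = s⁻¹ ∧ orderOf s = 3 then 2
  else 0

/-- The weighted Laplacian `Δ_{H*}` of the associated pair `(H*, w)` (vertex measure ≡ 1),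
acting on functions and restricted to `S*`. -/
noncomputable def lapHstar {S : Type*} (H : SimpleGraph S) (m : S → ℕ∞)
    (f : RAACH H m → ℝ) (s : RAACH H m) : ℝ :=
  ∑ᶠ t ∈ Sstar H m, (apWeight H m s t : ℝ) * (f t - f s)

/-- The Laplacian `Δ_{S₁}` of the subgraph of the Cayley graph induced on the 1-sphere
`S₁(e) = S*` (vertex measure ≡ 1, unit edge weights). -/
noncomputable def lapS1 {S : Type*} (H : SimpleGraph S) (m : S → ℕ∞)
    (f : RAACH H m → ℝ) (s : RAACH H m) : ℝ :=
  ∑ᶠ t ∈ Sstar H m, (if (cayRAACH H m).Adj s t then (1 : ℝ) else 0) * (f t - f s)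

/-- The 2-sphere around the identity in the Cayley graph. -/
def sphere2 {S : Type*} (H : SimpleGraph S) (m : S → ℕ∞) : Set (RAACH H m) :=
  {z | (cayRAACH H m).dist 1 z = 2}

/-- The in-degree `d_z⁻` of `z ∈ S₂(e)`: the number of vertices of `S₁(e)` adjacent to `z`. -/
noncomputable def dzMinus {S : Type*} (H : SimpleGraph S) (m : S → ℕ∞)
    (z : RAACH H m) : ℕ :=
  Nat.card {y : RAACH H m // y ∈ Sstar H m ∧ (cayRAACH H m).Adj y z}

/-- The edge weights `w'(u,v) = Σ_{z ∈ S₂, z ∼ u, z ∼ v} 1/d_z⁻` (for `u ≠ v`) on `S₁(e)`. -/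
noncomputable def wS1' {S : Type*} (H : SimpleGraph S) (m : S → ℕ∞)
    (u v : RAACH H m) : ℝ :=
  if u = v then 0
  else ∑ᶠ z ∈ sphere2 H m,
    if (cayRAACH H m).Adj u z ∧ (cayRAACH H m).Adj v z then ((dzMinus H m z : ℝ))⁻¹ else 0

/-- The weighted Laplacian `Δ_{S₁'}` on `S₁(e)` with edge weights `wS1'` and vertex
measure ≡ 1. -/
noncomputable def lapS1' {S : Type*} (H : SimpleGraph S) (m : S → ℕ∞)
    (f : RAACH H m → ℝ) (s : RAACH H m) : ℝ :=
  ∑ᶠ t ∈ Sstar H m, wS1' H m s t * (f t - f s)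

section Aux

variable {S : Type} (H : SimpleGraph S) (m : S → ℕ∞)

/-- The abelianization-type homomorphism to `∏ ZMod ((m a).toNat)`. -/
noncomputable def Dhom : RAACH H m →* Multiplicative (∀ a : S, ZMod ((m a).toNat)) :=
  PresentedGroup.toGroup
    (f := fun a => Multiplicative.ofAdd (Pi.single a (1 : ZMod ((m a).toNat)))) (by
    intro r hr
    rcases hr with ⟨s, k, hk, rfl⟩ | ⟨s, t, hst, rfl⟩
    · have hns : (m s).toNat = k := by rw [hk]; exact ENat.toNat_coe k
      have h0 : k • Pi.single (M := fun a : S => ZMod ((m a).toNat)) s 1 = 0 := by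
        funext a
        by_cases h : a = s
        · subst h
          simp only [Pi.smul_apply, Pi.single_eq_same, Pi.zero_apply, nsmul_eq_mul, mul_one]
          rw [hns] at *
          exact ZMod.natCast_self k
        · simp [Pi.single_eq_of_ne h]
      rw [map_pow, FreeGroup.lift_apply_of, ← ofAdd_nsmul, h0]; rfl
    · rw [map_commutatorElement, commutatorElement_eq_one_iff_commute]
      exact Commute.all _ _)

/-- The `b`-coordinate of the abelianization image. -/
noncomputable def co (b : S) (x : RAACH H m) : ZMod ((m b).toNat) :=
  Multiplicative.toAdd (Dhom H m x) b

lemma co_one (b : S) : co H m b 1 = 0 := by simp [co]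

lemma co_mul (b : S) (x y : RAACH H m) :
    co H m b (x * y) = co H m b x + co H m b y := by
  simp [co, map_mul, toAdd_mul]

lemma co_inv (b : S) (x : RAACH H m) : co H m b x⁻¹ = - co H m b x := by
  simp [co, map_inv]

lemma co_gen_zpow (b a : S) (e : ℤ) :
    co H m b (raachGen H m a ^ e) =
      if b = a then ((e : ℤ) : ZMod ((m b).toNat)) else 0 := by
  have h1 : Dhom H m (raachGen H m a) =
      Multiplicative.ofAdd (Pi.single a (1 : ZMod ((m a).toNat))) :=
    PresentedGroup.toGroup.of _
  rw [co, map_zpow, h1, toAdd_zpow]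
  by_cases h : b = a
  · subst h
    simp [toAdd_ofAdd, Pi.smul_apply, Pi.single_eq_same, zsmul_eq_mul]
  · simp [toAdd_ofAdd, Pi.smul_apply, Pi.single_eq_of_ne h, h]

lemma co_gen_pow (b a : S) (k : ℕ) :
    co H m b (raachGen H m a ^ k) =
      if b = a then ((k : ℤ) : ZMod ((m b).toNat)) else 0 := by
  rw [← zpow_natCast, co_gen_zpow]

/-- Equality of coordinates yields integer divisibility. -/
lemma coord_solve {b : S} {x y : ℤ}
    (h : ((x : ℤ) : ZMod ((m b).toNat)) = ((y : ℤ) : ZMod ((m b).toNat))) :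
    ((m b).toNat : ℤ) ∣ (x - y) := by
  have h0 : ((x - y : ℤ) : ZMod ((m b).toNat)) = 0 := by push_cast; rw [sub_eq_zero]; exact_mod_cast h
  exact (CharP.intCast_eq_zero_iff (ZMod ((m b).toNat)) ((m b).toNat) _).mp h0

lemma gen_pow_rel {a : S} {k : ℕ} (hk : m a = (k : ℕ∞)) : raachGen H m a ^ k = 1 := by
  have hmem : (FreeGroup.of a ^ k : FreeGroup S) ∈ raachRels H m := Or.inl ⟨a, k, hk, rfl⟩
  have h2 : PresentedGroup.mk (raachRels H m) (FreeGroup.of a ^ k) = 1 :=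
    (QuotientGroup.eq_one_iff _).mpr (Subgroup.subset_normalClosure hmem)
  rw [map_pow] at h2
  exact h2

lemma commute_gen_of_adj {a b : S} (h : H.Adj a b) :
    Commute (raachGen H m a) (raachGen H m b) := by
  have hmem : (⁅FreeGroup.of a, FreeGroup.of b⁆ : FreeGroup S) ∈ raachRels H m :=
    Or.inr ⟨a, b, h, rfl⟩
  have h2 : PresentedGroup.mk (raachRels H m) ⁅FreeGroup.of a, FreeGroup.of b⁆ = 1 :=
    (QuotientGroup.eq_one_iff _).mpr (Subgroup.subset_normalClosure hmem)
  rw [map_commutatorElement] at h2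
  exact commutatorElement_eq_one_iff_commute.mp h2

lemma mem_sstar_iff {x : RAACH H m} :
    x ∈ Sstar H m ↔ ∃ (a : S) (e : ℤ), (e = 1 ∨ e = -1) ∧ x = raachGen H m a ^ e := by
  constructor
  · rintro ⟨a, h | h⟩
    · exact ⟨a, 1, Or.inl rfl, by simpa using h⟩
    · exact ⟨a, -1, Or.inr rfl, by simpa using h⟩
  · rintro ⟨a, e, he | he, rfl⟩ <;> subst he
    · exact ⟨a, Or.inl (by simp)⟩
    · exact ⟨a, Or.inr (by simp)⟩

lemma sstar_inv {x : RAACH H m} (hx : x ∈ Sstar H m) : x⁻¹ ∈ Sstar H m := by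
  rw [mem_sstar_iff] at hx ⊢
  obtain ⟨a, e, he, rfl⟩ := hx
  exact ⟨a, -e, by omega, by rw [← zpow_neg]⟩

lemma orderOf_gen (a : S) : orderOf (raachGen H m a) = (m a).toNat := by
  have h4 : raachGen H m a ^ (orderOf (raachGen H m a)) = 1 := pow_orderOf_eq_one _
  have h5 := congrArg (co H m a) h4
  rw [co_gen_pow, if_pos rfl, co_one] at h5
  have hd : ((m a).toNat : ℤ) ∣ ((orderOf (raachGen H m a) : ℤ) - 0) :=
    coord_solve m (by exact_mod_cast h5)
  rcases eq_or_ne (m a) ⊤ with h | h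
  · have h0 : (m a).toNat = 0 := by rw [h]; rfl
    rw [h0] at hd ⊢
    omega
  · obtain ⟨k, hk⟩ := WithTop.ne_top_iff_exists.mp h
    have hna : (m a).toNat = k := by rw [← hk]; exact ENat.toNat_coe k
    have h1 : raachGen H m a ^ k = 1 := gen_pow_rel H m hk.symm
    have h2 : orderOf (raachGen H m a) ∣ k := orderOf_dvd_of_pow_eq_one h1
    rw [hna] at hd ⊢
    have h3 : k ∣ orderOf (raachGen H m a) := by
      have h6 : (k : ℤ) ∣ (orderOf (raachGen H m a) : ℤ) := by simpa using hd
      exact_mod_cast h6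
    exact Nat.dvd_antisymm h2 h3

lemma commute_zpow_units {x y : RAACH H m} {e d : ℤ} (he : e = 1 ∨ e = -1)
    (hd : d = 1 ∨ d = -1) : Commute (x ^ e) (y ^ d) ↔ Commute x y := by
  rcases he with rfl | rfl <;> rcases hd with rfl | rfl <;>
    simp [zpow_neg, zpow_one, Commute.inv_left_iff, Commute.inv_right_iff]

/-- Concrete permutations used to detect non-commutation. -/
def permOfL : ℕ → Equiv.Perm (Fin 7)
  | 3 => Equiv.swap 0 1 * Equiv.swap 1 2
  | 4 => Equiv.swap 0 1 * Equiv.swap 1 2 * Equiv.swap 2 3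
  | _ => Equiv.swap 0 1

def permOfR : ℕ → Equiv.Perm (Fin 7)
  | 3 => Equiv.swap 0 4 * Equiv.swap 4 5
  | 4 => Equiv.swap 0 4 * Equiv.swap 4 5 * Equiv.swap 5 6
  | _ => Equiv.swap 0 4

lemma not_commute_gen (hm : ∀ s, m s = 2 ∨ m s = 3 ∨ m s = 4 ∨ m s = (⊤ : ℕ∞))
    {σ τ : S} (hne : σ ≠ τ) (hadj : ¬ H.Adj σ τ) :
    ¬ Commute (raachGen H m σ) (raachGen H m τ) := by
  intro hc
  classical
  set f : S → Equiv.Perm (Fin 7) :=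
    fun u => if u = σ then permOfL (m σ).toNat else if u = τ then permOfR (m τ).toNat else 1
    with hf
  have hrel : ∀ r ∈ raachRels H m, FreeGroup.lift f r = 1 := by
    intro r hr
    rcases hr with ⟨u, k, hk, rfl⟩ | ⟨u, v, huv, rfl⟩
    · rw [map_pow, FreeGroup.lift_apply_of]
      by_cases h1 : u = σ
      · subst h1
        have hfu : f u = permOfL (m u).toNat := by simp [hf]
        rw [hfu]
        rcases hm u with h | h | h | h
        · have hk2 : k = 2 := by rw [h] at hk; exact_mod_cast hk.symm
          have hn : (m u).toNat = 2 := by rw [h]; rfl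
          subst hk2; rw [hn]; decide
        · have hk2 : k = 3 := by rw [h] at hk; exact_mod_cast hk.symm
          have hn : (m u).toNat = 3 := by rw [h]; rfl
          subst hk2; rw [hn]; decide
        · have hk2 : k = 4 := by rw [h] at hk; exact_mod_cast hk.symm
          have hn : (m u).toNat = 4 := by rw [h]; rfl
          subst hk2; rw [hn]; decide
        · rw [h] at hk; exact absurd hk.symm (by simp)
      · by_cases h2 : u = τ
        · subst h2
          have hfu : f u = permOfR (m u).toNat := by simp [hf, h1]
          rw [hfu]
          rcases hm u with h | h | h | h
          · have hk2 : k = 2 := by rw [h] at hk; exact_mod_cast hk.symm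
            have hn : (m u).toNat = 2 := by rw [h]; rfl
            subst hk2; rw [hn]; decide
          · have hk2 : k = 3 := by rw [h] at hk; exact_mod_cast hk.symm
            have hn : (m u).toNat = 3 := by rw [h]; rfl
            subst hk2; rw [hn]; decide
          · have hk2 : k = 4 := by rw [h] at hk; exact_mod_cast hk.symm
            have hn : (m u).toNat = 4 := by rw [h]; rfl
            subst hk2; rw [hn]; decide
          · rw [h] at hk; exact absurd hk.symm (by simp)
        · have hfu : f u = 1 := by simp [hf, h1, h2]
          rw [hfu, one_pow]
    · rw [map_commutatorElement, FreeGroup.lift_apply_of, FreeGroup.lift_apply_of,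
        commutatorElement_eq_one_iff_commute]
      by_cases h1 : u = σ
      · by_cases h2 : v = τ
        · subst h1; subst h2; exact absurd huv hadj
        · have h3 : v ≠ σ := fun hv => H.loopless.irrefl u (by rwa [hv, ← h1] at huv)
          have hfv : f v = 1 := by simp [hf, h3, h2]
          rw [hfv]; exact Commute.one_right _
      · by_cases h3 : u = τ
        · have h4 : v ≠ σ := fun hv => hadj (by rw [h3, hv] at huv; exact huv.symm)
          have h5 : v ≠ τ := fun hv => H.loopless.irrefl u (by rwa [hv, ← h3] at huv)
          have hfv : f v = 1 := by simp [hf, h4, h5]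
          rw [hfv]; exact Commute.one_right _
        · have hfu : f u = 1 := by simp [hf, h1, h3]
          rw [hfu]; exact Commute.one_left _
  set ψ := PresentedGroup.toGroup hrel with hψ
  have h1 : ψ (raachGen H m σ) = permOfL (m σ).toNat := by
    rw [hψ]
    show PresentedGroup.toGroup hrel (PresentedGroup.of σ) = _
    rw [PresentedGroup.toGroup.of]
    simp [hf]
  have h2 : ψ (raachGen H m τ) = permOfR (m τ).toNat := by
    rw [hψ]
    show PresentedGroup.toGroup hrel (PresentedGroup.of τ) = _
    rw [PresentedGroup.toGroup.of]
    simp [hf, hne.symm]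
  have hc2 : Commute (permOfL (m σ).toNat) (permOfR (m τ).toNat) := by
    rw [← h1, ← h2]; exact hc.map ψ
  have hL : permOfL (m σ).toNat = Equiv.swap 0 1 ∨
      permOfL (m σ).toNat = Equiv.swap 0 1 * Equiv.swap 1 2 ∨
      permOfL (m σ).toNat = Equiv.swap 0 1 * Equiv.swap 1 2 * Equiv.swap 2 3 := by
    rcases hm σ with h | h | h | h <;> rw [h]
    · exact Or.inl rfl
    · exact Or.inr (Or.inl rfl)
    · exact Or.inr (Or.inr rfl)
    · exact Or.inl rfl
  have hR : permOfR (m τ).toNat = Equiv.swap 0 4 ∨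
      permOfR (m τ).toNat = Equiv.swap 0 4 * Equiv.swap 4 5 ∨
      permOfR (m τ).toNat = Equiv.swap 0 4 * Equiv.swap 4 5 * Equiv.swap 5 6 := by
    rcases hm τ with h | h | h | h <;> rw [h]
    · exact Or.inl rfl
    · exact Or.inr (Or.inl rfl)
    · exact Or.inr (Or.inr rfl)
    · exact Or.inl rfl
  have hc3 : permOfL (m σ).toNat * permOfR (m τ).toNat
      = permOfR (m τ).toNat * permOfL (m σ).toNat := hc2
  rcases hL with h | h | h <;> rcases hR with h' | h' | h' <;> rw [h, h'] at hc3 <;>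
    exact absurd hc3 (by decide)

lemma nval (hm : ∀ s, m s = 2 ∨ m s = 3 ∨ m s = 4 ∨ m s = (⊤ : ℕ∞)) (a : S) :
    (m a).toNat = 2 ∨ (m a).toNat = 3 ∨ (m a).toNat = 4 ∨ (m a).toNat = 0 := by
  rcases hm a with h | h | h | h
  · exact Or.inl (by rw [h]; rfl)
  · exact Or.inr (Or.inl (by rw [h]; rfl))
  · exact Or.inr (Or.inr (Or.inl (by rw [h]; rfl)))
  · exact Or.inr (Or.inr (Or.inr (by rw [h]; rfl)))

lemma one_notin_sstar (hm : ∀ s, m s = 2 ∨ m s = 3 ∨ m s = 4 ∨ m s = (⊤ : ℕ∞)) :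
    (1 : RAACH H m) ∉ Sstar H m := by
  intro h
  rw [mem_sstar_iff] at h
  obtain ⟨a, e, he, h1⟩ := h
  have hco := congrArg (co H m a) h1
  simp only [co_one, co_gen_zpow, if_true] at hco
  have hdvd := coord_solve m (x := 0) (y := e) (b := a)
    (by push_cast; first | linear_combination hco | linear_combination -hco)
  rcases nval m hm a with h | h | h | h <;> rw [h] at hdvd <;> rcases he with rfl | rfl <;>
    omega

lemma cay_adj_iff (x z : RAACH H m) :
    (cayRAACH H m).Adj x z ↔ (z ≠ x ∧ x⁻¹ * z ∈ Sstar H m) := by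
  show (x ≠ z ∧ (x⁻¹ * z ∈ Sstar H m ∨ z⁻¹ * x ∈ Sstar H m)) ↔ _
  constructor
  · rintro ⟨hne, h | h⟩
    · exact ⟨Ne.symm hne, h⟩
    · refine ⟨Ne.symm hne, ?_⟩
      have h2 := sstar_inv H m h
      rwa [mul_inv_rev, inv_inv] at h2
  · rintro ⟨h1, h2⟩
    exact ⟨Ne.symm h1, Or.inl h2⟩

lemma cay_adj_one_iff (hm : ∀ s, m s = 2 ∨ m s = 3 ∨ m s = 4 ∨ m s = (⊤ : ℕ∞))
    (z : RAACH H m) : (cayRAACH H m).Adj 1 z ↔ z ∈ Sstar H m := by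
  rw [cay_adj_iff]
  constructor
  · rintro ⟨h1, h2⟩; rwa [inv_one, one_mul] at h2
  · intro h
    refine ⟨?_, by rwa [inv_one, one_mul]⟩
    rintro rfl
    exact one_notin_sstar H m hm h

lemma mem_sphere2_iff (hm : ∀ s, m s = 2 ∨ m s = 3 ∨ m s = 4 ∨ m s = (⊤ : ℕ∞))
    (z : RAACH H m) : z ∈ sphere2 H m ↔
      z ∉ Sstar H m ∧ z ≠ 1 ∧ ∃ y ∈ Sstar H m, y⁻¹ * z ∈ Sstar H m := by
  constructor
  · intro h
    have hdist : (cayRAACH H m).dist 1 z = 2 := h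
    have hz1 : z ≠ 1 := by
      rintro rfl
      rw [SimpleGraph.dist_self] at hdist
      exact absurd hdist (by norm_num)
    have hzs : z ∉ Sstar H m := by
      intro hz
      have : (cayRAACH H m).dist 1 z = 1 :=
        SimpleGraph.dist_eq_one_iff_adj.mpr ((cay_adj_one_iff H m hm z).mpr hz)
      omega
    have hreach : (cayRAACH H m).Reachable 1 z := by
      by_contra hr
      have : (cayRAACH H m).dist 1 z = 0 :=
        SimpleGraph.dist_eq_zero_iff_eq_or_not_reachable.mpr (Or.inr hr)
      omega
    obtain ⟨p, hp⟩ := hreach.exists_walk_length_eq_dist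
    rw [hdist] at hp
    set y := p.getVert 1 with hy
    have h1 : (cayRAACH H m).Adj 1 y := by
      have := p.adj_getVert_succ (i := 0) (by omega)
      rwa [SimpleGraph.Walk.getVert_zero] at this
    have h2 : (cayRAACH H m).Adj y z := by
      have := p.adj_getVert_succ (i := 1) (by omega)
      rwa [show p.getVert 2 = z from by rw [← hp]; exact p.getVert_length] at this
    refine ⟨hzs, hz1, y, (cay_adj_one_iff H m hm y).mp h1, ?_⟩
    exact ((cay_adj_iff H m y z).mp h2).2
  · rintro ⟨hzs, hz1, y, hy, hyz⟩
    have h1 : (cayRAACH H m).Adj 1 y := (cay_adj_one_iff H m hm y).mpr hy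
    have h2 : (cayRAACH H m).Adj y z :=
      (cay_adj_iff H m y z).mpr ⟨fun h => hzs (h ▸ hy), hyz⟩
    have hle : (cayRAACH H m).dist 1 z ≤ 2 := by
      have := SimpleGraph.dist_le (SimpleGraph.Walk.cons h1 (SimpleGraph.Walk.cons h2
        SimpleGraph.Walk.nil))
      simpa using this
    have hne0 : (cayRAACH H m).dist 1 z ≠ 0 := by
      intro h0
      rcases SimpleGraph.dist_eq_zero_iff_eq_or_not_reachable.mp h0 with h | h
      · exact hz1 h.symm
      · exact h ⟨SimpleGraph.Walk.cons h1 (SimpleGraph.Walk.cons h2 SimpleGraph.Walk.nil)⟩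
    have hne1 : (cayRAACH H m).dist 1 z ≠ 1 := by
      intro h0
      have := SimpleGraph.dist_eq_one_iff_adj.mp h0
      exact hzs ((cay_adj_one_iff H m hm z).mp this)
    show (cayRAACH H m).dist 1 z = 2
    omega

lemma wS1'_zero (s t : RAACH H m) (hst : s ≠ t)
    (hempty : ∀ z, z ∈ sphere2 H m →
      ¬((cayRAACH H m).Adj s z ∧ (cayRAACH H m).Adj t z)) : wS1' H m s t = 0 := by
  rw [wS1', if_neg hst]
  rw [finsum_mem_congr rfl (g := fun _ => (0:ℝ)) (fun z hz => by rw [if_neg (hempty z hz)])]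
  simp

lemma wS1'_single (s t z0 : RAACH H m) (hst : s ≠ t)
    (hz0 : z0 ∈ sphere2 H m) (hsz : (cayRAACH H m).Adj s z0) (htz : (cayRAACH H m).Adj t z0)
    (huniq : ∀ z, z ∈ sphere2 H m → (cayRAACH H m).Adj s z → (cayRAACH H m).Adj t z → z = z0)
    (hd : dzMinus H m z0 = 2) : wS1' H m s t = 2⁻¹ := by
  rw [wS1', if_neg hst, finsum_mem_def]
  rw [finsum_eq_single _ z0 ?h0]
  · rw [Set.indicator_of_mem hz0, if_pos ⟨hsz, htz⟩, hd]
    norm_num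
  · intro x hx
    by_cases hmem : x ∈ sphere2 H m
    · rw [Set.indicator_of_mem hmem]
      rw [if_neg]
      rintro ⟨ha, hb⟩
      exact hx (huniq x hmem ha hb)
    · exact Set.indicator_of_notMem hmem _

lemma dz_eq_two (z a b : RAACH H m) (hab : a ≠ b)
    (hset : ∀ y, (y ∈ Sstar H m ∧ (cayRAACH H m).Adj y z) ↔ (y = a ∨ y = b)) :
    dzMinus H m z = 2 := by
  rw [dzMinus]
  have he : {y : RAACH H m // y ∈ Sstar H m ∧ (cayRAACH H m).Adj y z} ≃
      {y : RAACH H m // y ∈ ({a, b} : Set (RAACH H m))} :=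
    Equiv.subtypeEquivRight (fun y => by rw [hset y]; simp)
  rw [Nat.card_congr he]
  rw [Nat.card_coe_set_eq, Set.ncard_pair hab]

lemma zpow_eq_of_dvd (a : S) (k : ℕ) (hk : m a = (k : ℕ∞)) {x y : ℤ}
    (h : (k : ℤ) ∣ (x - y)) : raachGen H m a ^ x = raachGen H m a ^ y := by
  obtain ⟨c, hc⟩ := h
  have h1 : raachGen H m a ^ (k : ℤ) = 1 := by
    rw [zpow_natCast]; exact gen_pow_rel H m hk
  have h2 : raachGen H m a ^ x = raachGen H m a ^ (y + (k : ℤ) * c) := by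
    congr 1; omega
  rw [h2, zpow_add, zpow_mul, h1, one_zpow, mul_one]

lemma zpow_eq_of_units_dvd (hm : ∀ s, m s = 2 ∨ m s = 3 ∨ m s = 4 ∨ m s = (⊤ : ℕ∞))
    (a : S) {e d : ℤ} (he : e = 1 ∨ e = -1) (hd : d = 1 ∨ d = -1)
    (hdvd : (((m a).toNat : ℕ) : ℤ) ∣ (e - d)) :
    raachGen H m a ^ e = raachGen H m a ^ d := by
  rcases hm a with h | h | h | h
  · have hn : (m a).toNat = 2 := by rw [h]; rfl
    rw [hn] at hdvd
    exact zpow_eq_of_dvd H m a 2 h hdvd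
  · have hn : (m a).toNat = 3 := by rw [h]; rfl
    rw [hn] at hdvd
    have : e = d := by omega
    rw [this]
  · have hn : (m a).toNat = 4 := by rw [h]; rfl
    rw [hn] at hdvd
    have : e = d := by omega
    rw [this]
  · have hn : (m a).toNat = 0 := by rw [h]; rfl
    rw [hn] at hdvd
    have : e = d := by omega
    rw [this]

lemma cast_unit_ne_zero (hm : ∀ s, m s = 2 ∨ m s = 3 ∨ m s = 4 ∨ m s = (⊤ : ℕ∞))
    (b : S) {e : ℤ} (he : e = 1 ∨ e = -1) :
    ((e : ℤ) : ZMod ((m b).toNat)) ≠ 0 := by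
  intro h
  have hdvd := coord_solve m (x := e) (y := 0) (b := b) (by rw [Int.cast_zero]; exact h)
  rcases nval m hm b with hn | hn | hn | hn <;> rw [hn] at hdvd <;> rcases he with rfl | rfl <;>
    omega

lemma ne_of_co_ne (b : S) {x y : RAACH H m} (h : co H m b x ≠ co H m b y) : x ≠ y :=
  fun he => h (by rw [he])

lemma ne_one_of_co (b : S) {x : RAACH H m} (h : co H m b x ≠ 0) : x ≠ 1 :=
  fun he => h (by rw [he, co_one])

lemma gen_zpow_notstar (hm : ∀ s, m s = 2 ∨ m s = 3 ∨ m s = 4 ∨ m s = (⊤ : ℕ∞))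
    (σ : S) (x : ℤ)
    (hx : ∀ e : ℤ, (e = 1 ∨ e = -1) → ¬ ((((m σ).toNat : ℕ) : ℤ) ∣ (x - e))) :
    raachGen H m σ ^ x ∉ Sstar H m := by
  intro hmem
  obtain ⟨β, e, he, heq⟩ := (mem_sstar_iff H m).mp hmem
  by_cases hβ : σ = β
  · subst hβ
    have hco := congrArg (co H m σ) heq
    simp only [co_gen_zpow, if_true] at hco
    have hdvd := coord_solve m (x := x) (y := e) (b := σ) (by exact_mod_cast hco)
    exact hx e he hdvd
  · have hco := congrArg (co H m β) heq
    simp only [co_gen_zpow, if_true] at hco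
    rw [if_neg (fun h => hβ h.symm)] at hco
    have hdvd := coord_solve m (x := 0) (y := e) (b := β)
      (by rw [Int.cast_zero]; exact_mod_cast hco)
    rcases nval m hm β with hn | hn | hn | hn <;> rw [hn] at hdvd <;>
      rcases he with rfl | rfl <;> omega

lemma notstar_two_coords {x : RAACH H m} (σ τ : S) (hne : σ ≠ τ)
    (h1 : co H m σ x ≠ 0) (h2 : co H m τ x ≠ 0) : x ∉ Sstar H m := by
  intro hmem
  obtain ⟨a, e, he, heq⟩ := (mem_sstar_iff H m).mp hmem
  by_cases ha : σ = a
  · subst ha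
    apply h2
    rw [heq, co_gen_zpow, if_neg (Ne.symm hne)]
  · apply h1
    rw [heq, co_gen_zpow, if_neg ha]

lemma co_mul_zpow (b a1 a2 : S) (e1 e2 : ℤ) :
    co H m b (raachGen H m a1 ^ e1 * raachGen H m a2 ^ e2) =
      (if b = a1 then ((e1 : ℤ) : ZMod ((m b).toNat)) else 0) +
      (if b = a2 then ((e2 : ℤ) : ZMod ((m b).toNat)) else 0) := by
  rw [co_mul, co_gen_zpow, co_gen_zpow]

lemma unit_not_dvd (hm : ∀ s, m s = 2 ∨ m s = 3 ∨ m s = 4 ∨ m s = (⊤ : ℕ∞))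
    (b : S) {e : ℤ} (he : e = 1 ∨ e = -1) (h : (((m b).toNat : ℕ) : ℤ) ∣ e) : False := by
  rcases nval m hm b with hn | hn | hn | hn <;> rw [hn] at h <;> rcases he with rfl | rfl <;>
    omega

lemma cn_two_letter (hm : ∀ s, m s = 2 ∨ m s = 3 ∨ m s = 4 ∨ m s = (⊤ : ℕ∞))
    (σ τ : S) (hne : σ ≠ τ) {ε δ : ℤ}
    (hε : ε = 1 ∨ ε = -1) (hδ : δ = 1 ∨ δ = -1) :
    ∀ z ∈ sphere2 H m, (cayRAACH H m).Adj (raachGen H m σ ^ ε) z →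
      (cayRAACH H m).Adj (raachGen H m τ ^ δ) z →
      (z = raachGen H m σ ^ ε * raachGen H m τ ^ δ ∧
       raachGen H m σ ^ ε * raachGen H m τ ^ δ = raachGen H m τ ^ δ * raachGen H m σ ^ ε) := by
  intro z hz h1 h2
  obtain ⟨hzs, hz1, -⟩ := (mem_sphere2_iff H m hm z).mp hz
  obtain ⟨-, ha⟩ := (cay_adj_iff H m _ z).mp h1
  obtain ⟨-, hb⟩ := (cay_adj_iff H m _ z).mp h2
  obtain ⟨α, εa, hεa, haeq⟩ := (mem_sstar_iff H m).mp ha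
  obtain ⟨β, εb, hεb, hbeq⟩ := (mem_sstar_iff H m).mp hb
  have hzeq1 : z = raachGen H m σ ^ ε * raachGen H m α ^ εa := by
    rw [← haeq]; exact (mul_inv_cancel_left _ _).symm
  have hzeq2 : z = raachGen H m τ ^ δ * raachGen H m β ^ εb := by
    rw [← hbeq]; exact (mul_inv_cancel_left _ _).symm
  by_cases hα : α = σ
  · rw [hα] at hzeq1
    exfalso
    have hz2 : z = raachGen H m σ ^ (ε + εa) := by
      rw [hzeq1]; exact (zpow_add _ _ _).symm
    rcases (show εa = -ε ∨ εa = ε by omega) with h | h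
    · apply hz1; rw [hz2, h]; simp
    · rw [h] at hz2
      have hz3 : raachGen H m σ ^ (ε + ε) =
          raachGen H m τ ^ δ * raachGen H m β ^ εb := by rw [← hz2, hzeq2]
      by_cases hβ : β = τ
      · rw [hβ] at hz3
        have hco := congrArg (co H m σ) hz3
        rw [co_gen_zpow, if_pos rfl, co_mul_zpow, if_neg hne, if_neg hne] at hco
        have hdvd := coord_solve m (x := ε + ε) (y := 0) (b := σ)
          (by push_cast at hco ⊢; linear_combination hco)
        rcases hm σ with hcase | hcase | hcase | hcase
        · apply hz1
          rw [hz2, zpow_eq_of_dvd H m σ 2 hcase (x := ε + ε) (y := 0) (by push_cast; omega)]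
          simp
        · have hn : (m σ).toNat = 3 := by rw [hcase]; rfl
          rw [hn] at hdvd; omega
        · have hn : (m σ).toNat = 4 := by rw [hcase]; rfl
          rw [hn] at hdvd; omega
        · have hn : (m σ).toNat = 0 := by rw [hcase]; rfl
          rw [hn] at hdvd; omega
      · have hco := congrArg (co H m τ) hz3
        rw [co_gen_zpow, if_neg (Ne.symm hne), co_mul_zpow, if_pos rfl,
          if_neg (fun h => hβ h.symm)] at hco
        have hdvd := coord_solve m (x := 0) (y := δ) (b := τ)
          (by push_cast at hco ⊢; linear_combination hco)
        rw [zero_sub] at hdvd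
        exact unit_not_dvd m hm τ hδ (dvd_neg.mp hdvd)
  · by_cases hβ : β = τ
    · rw [hβ] at hzeq2
      exfalso
      have hz2 : z = raachGen H m τ ^ (δ + εb) := by
        rw [hzeq2]; exact (zpow_add _ _ _).symm
      rcases (show εb = -δ ∨ εb = δ by omega) with h | h
      · apply hz1; rw [hz2, h]; simp
      · rw [h] at hz2
        have hz3 : raachGen H m τ ^ (δ + δ) =
            raachGen H m σ ^ ε * raachGen H m α ^ εa := by rw [← hz2, hzeq1]
        have hco := congrArg (co H m σ) hz3
        rw [co_gen_zpow, if_neg hne, co_mul_zpow, if_pos rfl,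
          if_neg (fun h => hα h.symm)] at hco
        have hdvd := coord_solve m (x := 0) (y := ε) (b := σ)
          (by push_cast at hco ⊢; linear_combination hco)
        rw [zero_sub] at hdvd
        exact unit_not_dvd m hm σ hε (dvd_neg.mp hdvd)
    · have heq : raachGen H m σ ^ ε * raachGen H m α ^ εa =
          raachGen H m τ ^ δ * raachGen H m β ^ εb := by rw [← hzeq1, hzeq2]
      by_cases hατ : α = τ
      · rw [hατ] at heq hzeq1
        have hco := congrArg (co H m τ) heq
        rw [co_mul_zpow, if_neg (Ne.symm hne), if_pos rfl, co_mul_zpow, if_pos rfl,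
          if_neg (fun h => hβ h.symm)] at hco
        have hdvd := coord_solve m (x := εa) (y := δ) (b := τ)
          (by push_cast at hco ⊢; linear_combination hco)
        have haT : raachGen H m τ ^ εa = raachGen H m τ ^ δ :=
          zpow_eq_of_units_dvd H m hm τ hεa hδ hdvd
        have hzfin : z = raachGen H m σ ^ ε * raachGen H m τ ^ δ := by
          rw [hzeq1, haT]
        by_cases hβσ : β = σ
        · rw [hβσ] at heq hzeq2
          have hco2 := congrArg (co H m σ) heq
          rw [co_mul_zpow, if_pos rfl, if_neg hne, co_mul_zpow, if_neg hne,
            if_pos rfl] at hco2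
          have hdvd2 := coord_solve m (x := ε) (y := εb) (b := σ)
            (by push_cast at hco2 ⊢; linear_combination hco2)
          have hbT : raachGen H m σ ^ εb = raachGen H m σ ^ ε :=
            zpow_eq_of_units_dvd H m hm σ hεb hε (dvd_sub_comm.mp hdvd2)
          have hzfin2 : z = raachGen H m τ ^ δ * raachGen H m σ ^ ε := by
            rw [hzeq2, hbT]
          exact ⟨hzfin, by rw [← hzfin, hzfin2]⟩
        · exfalso
          have hco2 := congrArg (co H m σ) heq
          rw [co_mul_zpow, if_pos rfl, if_neg hne, co_mul_zpow, if_neg hne,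
            if_neg (fun h => hβσ h.symm)] at hco2
          have hdvd2 := coord_solve m (x := ε) (y := 0) (b := σ)
            (by push_cast at hco2 ⊢; linear_combination hco2)
          rw [sub_zero] at hdvd2
          exact unit_not_dvd m hm σ hε hdvd2
      · exfalso
        by_cases hαβ : β = α
        · rw [hαβ] at heq
          have hco := congrArg (co H m α) heq
          rw [co_mul_zpow, if_neg hα, if_pos rfl, co_mul_zpow,
            if_neg hατ, if_pos rfl] at hco
          have hdvd := coord_solve m (x := εa) (y := εb) (b := α)
            (by push_cast at hco ⊢; linear_combination hco)
          have hab : raachGen H m α ^ εa = raachGen H m α ^ εb :=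
            zpow_eq_of_units_dvd H m hm α hεa hεb hdvd
          rw [hab] at heq
          have hcan : raachGen H m σ ^ ε = raachGen H m τ ^ δ := mul_right_cancel heq
          have hco2 := congrArg (co H m σ) hcan
          rw [co_gen_zpow, if_pos rfl, co_gen_zpow, if_neg hne] at hco2
          have hdvd2 := coord_solve m (x := ε) (y := 0) (b := σ)
            (by push_cast at hco2 ⊢; linear_combination hco2)
          rw [sub_zero] at hdvd2
          exact unit_not_dvd m hm σ hε hdvd2
        · have hco := congrArg (co H m α) heq
          rw [co_mul_zpow, if_neg hα, if_pos rfl, co_mul_zpow,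
            if_neg hατ, if_neg (fun h => hαβ h.symm)] at hco
          have hdvd := coord_solve m (x := εa) (y := 0) (b := α)
            (by push_cast at hco ⊢; linear_combination hco)
          rw [sub_zero] at hdvd
          exact unit_not_dvd m hm α hεa hdvd

lemma geninv (σ : S) (e : ℤ) : (raachGen H m σ ^ e)⁻¹ = raachGen H m σ ^ (-e) :=
  (zpow_neg _ _).symm

lemma ne_zpow_of (hm : ∀ s, m s = 2 ∨ m s = 3 ∨ m s = 4 ∨ m s = (⊤ : ℕ∞)) (σ : S)
    {x y : ℤ} (h : ¬ ((((m σ).toNat : ℕ) : ℤ) ∣ (x - y))) :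
    raachGen H m σ ^ x ≠ raachGen H m σ ^ y := by
  intro he
  have hco := congrArg (co H m σ) he
  rw [co_gen_zpow, if_pos rfl, co_gen_zpow, if_pos rfl] at hco
  exact h (coord_solve m hco)

lemma ne_cross_units (hm : ∀ s, m s = 2 ∨ m s = 3 ∨ m s = 4 ∨ m s = (⊤ : ℕ∞))
    (σ τ : S) (hne : σ ≠ τ) {ε δ : ℤ} (hε : ε = 1 ∨ ε = -1) :
    raachGen H m σ ^ ε ≠ raachGen H m τ ^ δ := by
  intro he
  have hco := congrArg (co H m σ) he
  rw [co_gen_zpow, if_pos rfl, co_gen_zpow, if_neg hne] at hco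
  have hdvd := coord_solve m (x := ε) (y := 0) (b := σ)
    (by rw [Int.cast_zero]; exact_mod_cast hco)
  rw [sub_zero] at hdvd
  exact unit_not_dvd m hm σ hε hdvd

lemma orderOf_gen_unit (σ : S) {ε : ℤ} (hε : ε = 1 ∨ ε = -1) :
    orderOf (raachGen H m σ ^ ε) = (m σ).toNat := by
  rcases hε with rfl | rfl
  · rw [zpow_one]; exact orderOf_gen H m σ
  · rw [zpow_neg, zpow_one, orderOf_inv]; exact orderOf_gen H m σ

lemma cn_one_letter (hm : ∀ s, m s = 2 ∨ m s = 3 ∨ m s = 4 ∨ m s = (⊤ : ℕ∞))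
    (σ : S) {ε : ℤ} (hε : ε = 1 ∨ ε = -1)
    (hne2 : raachGen H m σ ^ ε ≠ raachGen H m σ ^ (-ε)) :
    ∀ z ∈ sphere2 H m, (cayRAACH H m).Adj (raachGen H m σ ^ ε) z →
      (cayRAACH H m).Adj (raachGen H m σ ^ (-ε)) z →
      z = raachGen H m σ ^ ε * raachGen H m σ ^ ε := by
  intro z hz h1 h2
  obtain ⟨hzs, hz1, -⟩ := (mem_sphere2_iff H m hm z).mp hz
  obtain ⟨-, ha⟩ := (cay_adj_iff H m _ z).mp h1
  obtain ⟨-, hb⟩ := (cay_adj_iff H m _ z).mp h2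
  obtain ⟨α, εa, hεa, haeq⟩ := (mem_sstar_iff H m).mp ha
  obtain ⟨β, εb, hεb, hbeq⟩ := (mem_sstar_iff H m).mp hb
  have hzeq1 : z = raachGen H m σ ^ ε * raachGen H m α ^ εa := by
    rw [← haeq]; exact (mul_inv_cancel_left _ _).symm
  have hzeq2 : z = raachGen H m σ ^ (-ε) * raachGen H m β ^ εb := by
    rw [← hbeq]; exact (mul_inv_cancel_left _ _).symm
  by_cases hα : α = σ
  · rw [hα] at hzeq1
    rcases (show εa = -ε ∨ εa = ε by omega) with h | h
    · exfalso; apply hz1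
      rw [hzeq1, h, ← zpow_add]; simp
    · rw [hzeq1, h]
  · exfalso
    by_cases hβ : β = σ
    · rw [hβ] at hzeq2
      rcases (show εb = ε ∨ εb = -ε by omega) with h | h
      · apply hz1
        rw [hzeq2, h, ← zpow_add]; simp
      · rw [h] at hzeq2
        have hz2 : z = raachGen H m σ ^ (-ε + -ε) := by
          rw [hzeq2]; exact (zpow_add _ _ _).symm
        have hz3 : raachGen H m σ ^ (-ε + -ε) =
            raachGen H m σ ^ ε * raachGen H m α ^ εa := by rw [← hz2, hzeq1]
        have hco := congrArg (co H m σ) hz3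
        rw [co_gen_zpow, if_pos rfl, co_mul_zpow, if_pos rfl,
          if_neg (fun hh => hα hh.symm), add_zero] at hco
        have hdvd := coord_solve m (x := -ε + -ε) (y := ε) (b := σ)
          (by push_cast at hco ⊢; linear_combination hco)
        rcases hm σ with hcase | hcase | hcase | hcase
        · exact hne2 (zpow_eq_of_dvd H m σ 2 hcase (by push_cast; omega))
        · apply hzs
          rw [hz2, zpow_eq_of_dvd H m σ 3 hcase (x := -ε + -ε) (y := ε) (by
            have hn : (m σ).toNat = 3 := by rw [hcase]; rfl
            rw [hn] at hdvd; push_cast; omega)]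
          exact (mem_sstar_iff H m).mpr ⟨σ, ε, hε, rfl⟩
        · have hn : (m σ).toNat = 4 := by rw [hcase]; rfl
          rw [hn] at hdvd; omega
        · have hn : (m σ).toNat = 0 := by rw [hcase]; rfl
          rw [hn] at hdvd; omega
    · have heq : raachGen H m σ ^ ε * raachGen H m α ^ εa =
          raachGen H m σ ^ (-ε) * raachGen H m β ^ εb := by rw [← hzeq1, hzeq2]
      by_cases hαβ : β = α
      · rw [hαβ] at heq
        have hco := congrArg (co H m α) heq
        rw [co_mul_zpow, if_neg hα, if_pos rfl, co_mul_zpow, if_neg hα,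
          if_pos rfl] at hco
        have hdvd := coord_solve m (x := εa) (y := εb) (b := α)
          (by push_cast at hco ⊢; linear_combination hco)
        have hab : raachGen H m α ^ εa = raachGen H m α ^ εb :=
          zpow_eq_of_units_dvd H m hm α hεa hεb hdvd
        rw [hab] at heq
        exact hne2 (mul_right_cancel heq)
      · have hco := congrArg (co H m α) heq
        rw [co_mul_zpow, if_neg hα, if_pos rfl, co_mul_zpow, if_neg hα,
          if_neg (fun hh => hαβ hh.symm)] at hco
        have hdvd := coord_solve m (x := εa) (y := 0) (b := α)
          (by push_cast at hco ⊢; linear_combination hco)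
        rw [sub_zero] at hdvd
        exact unit_not_dvd m hm α hεa hdvd

lemma coeff_III (hm : ∀ s, m s = 2 ∨ m s = 3 ∨ m s = 4 ∨ m s = (⊤ : ℕ∞))
    (σ τ : S) (hne : σ ≠ τ) (hadj : ¬H.Adj σ τ) {ε δ : ℤ}
    (hε : ε = 1 ∨ ε = -1) (hδ : δ = 1 ∨ δ = -1) :
    (apWeight H m (raachGen H m σ ^ ε) (raachGen H m τ ^ δ) : ℝ) =
      2 * (if (cayRAACH H m).Adj (raachGen H m σ ^ ε) (raachGen H m τ ^ δ)
        then (1:ℝ) else 0) +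
      2 * wS1' H m (raachGen H m σ ^ ε) (raachGen H m τ ^ δ) := by
  have hncomm : ¬ Commute (raachGen H m σ ^ ε) (raachGen H m τ ^ δ) :=
    fun hc => not_commute_gen H m hm hne hadj ((commute_zpow_units H m hε hδ).mp hc)
  have hts : raachGen H m τ ^ δ ≠ (raachGen H m σ ^ ε)⁻¹ := by
    rw [geninv]
    exact ne_cross_units H m hm τ σ (Ne.symm hne) hδ
  have hW : apWeight H m (raachGen H m σ ^ ε) (raachGen H m τ ^ δ) = 0 := by
    simp only [apWeight]
    rw [if_neg (fun h => hncomm h.1), if_neg (fun h => hts h.1),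
      if_neg (fun h => hts h.1)]
  have hnadj : ¬ (cayRAACH H m).Adj (raachGen H m σ ^ ε) (raachGen H m τ ^ δ) := by
    rw [cay_adj_iff]
    rintro ⟨-, hmem⟩
    rw [geninv] at hmem
    refine notstar_two_coords H m σ τ hne ?_ ?_ hmem
    · rw [co_mul_zpow, if_pos rfl, if_neg hne, add_zero]
      exact cast_unit_ne_zero m hm σ (by omega)
    · rw [co_mul_zpow, if_neg (Ne.symm hne), if_pos rfl, zero_add]
      exact cast_unit_ne_zero m hm τ hδ
  have hw0 : wS1' H m (raachGen H m σ ^ ε) (raachGen H m τ ^ δ) = 0 := by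
    apply wS1'_zero H m _ _ (ne_cross_units H m hm σ τ hne hε)
    rintro z hz ⟨h1, h2⟩
    obtain ⟨-, hcomm⟩ := cn_two_letter H m hm σ τ hne hε hδ z hz h1 h2
    exact hncomm hcomm
  rw [hW, if_neg hnadj, hw0]
  norm_num

lemma coeff_II (hm : ∀ s, m s = 2 ∨ m s = 3 ∨ m s = 4 ∨ m s = (⊤ : ℕ∞))
    (σ τ : S) (hne : σ ≠ τ) (hadj : H.Adj σ τ) {ε δ : ℤ}
    (hε : ε = 1 ∨ ε = -1) (hδ : δ = 1 ∨ δ = -1) :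
    (apWeight H m (raachGen H m σ ^ ε) (raachGen H m τ ^ δ) : ℝ) =
      2 * (if (cayRAACH H m).Adj (raachGen H m σ ^ ε) (raachGen H m τ ^ δ)
        then (1:ℝ) else 0) +
      2 * wS1' H m (raachGen H m σ ^ ε) (raachGen H m τ ^ δ) := by
  set s := raachGen H m σ ^ ε with hs_def
  set t := raachGen H m τ ^ δ with ht_def
  set z0 := s * t with hz0_def
  have mem_s : s ∈ Sstar H m := (mem_sstar_iff H m).mpr ⟨σ, ε, hε, rfl⟩
  have mem_t : t ∈ Sstar H m := (mem_sstar_iff H m).mpr ⟨τ, δ, hδ, rfl⟩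
  have hcomm : Commute s t :=
    (commute_zpow_units H m hε hδ).mpr (commute_gen_of_adj H m hadj)
  have hst : s ≠ t := ne_cross_units H m hm σ τ hne hε
  have hts' : t ≠ s⁻¹ := by
    rw [hs_def, geninv]
    exact ne_cross_units H m hm τ σ (Ne.symm hne) hδ
  have hW : apWeight H m s t = 1 := by
    simp only [apWeight]
    rw [if_pos ⟨hcomm, Ne.symm hst, hts'⟩]
  have hz0n1 : z0 ≠ 1 := by
    intro h
    exact ne_cross_units H m hm σ τ hne hε
      ((eq_inv_of_mul_eq_one_left h).trans (geninv H m τ δ))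
  have hco_s : co H m σ z0 ≠ 0 := by
    rw [hz0_def, hs_def, ht_def, co_mul_zpow, if_pos rfl, if_neg hne, add_zero]
    exact cast_unit_ne_zero m hm σ hε
  have hco_t : co H m τ z0 ≠ 0 := by
    rw [hz0_def, hs_def, ht_def, co_mul_zpow, if_neg (Ne.symm hne), if_pos rfl, zero_add]
    exact cast_unit_ne_zero m hm τ hδ
  have hz0s : z0 ∉ Sstar H m := notstar_two_coords H m σ τ hne hco_s hco_t
  have hz0sphere : z0 ∈ sphere2 H m := by
    rw [mem_sphere2_iff H m hm]
    exact ⟨hz0s, hz0n1, s, mem_s, by rw [hz0_def, inv_mul_cancel_left]; exact mem_t⟩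
  have hz0nes : z0 ≠ s := by
    apply ne_of_co_ne H m τ
    rw [hz0_def, hs_def, ht_def, co_mul_zpow, if_neg (Ne.symm hne), if_pos rfl, zero_add,
      co_gen_zpow, if_neg (Ne.symm hne)]
    exact cast_unit_ne_zero m hm τ hδ
  have hz0net : z0 ≠ t := by
    apply ne_of_co_ne H m σ
    rw [hz0_def, hs_def, ht_def, co_mul_zpow, if_pos rfl, if_neg hne, add_zero,
      co_gen_zpow, if_neg hne]
    exact cast_unit_ne_zero m hm σ hε
  have hadj_s : (cayRAACH H m).Adj s z0 := by
    rw [cay_adj_iff]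
    exact ⟨hz0nes, by rw [hz0_def, inv_mul_cancel_left]; exact mem_t⟩
  have hadj_t : (cayRAACH H m).Adj t z0 := by
    rw [cay_adj_iff]
    refine ⟨hz0net, ?_⟩
    rw [hz0_def, hcomm.eq, inv_mul_cancel_left]
    exact mem_s
  have hnadj : ¬ (cayRAACH H m).Adj s t := by
    rw [cay_adj_iff]
    rintro ⟨-, hmem⟩
    rw [hs_def, geninv] at hmem
    refine notstar_two_coords H m σ τ hne ?_ ?_ hmem
    · rw [ht_def, co_mul_zpow, if_pos rfl, if_neg hne, add_zero]
      exact cast_unit_ne_zero m hm σ (by omega)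
    · rw [ht_def, co_mul_zpow, if_neg (Ne.symm hne), if_pos rfl, zero_add]
      exact cast_unit_ne_zero m hm τ hδ
  have hset : ∀ y, (y ∈ Sstar H m ∧ (cayRAACH H m).Adj y z0) ↔ (y = s ∨ y = t) := by
    intro y
    constructor
    · rintro ⟨hy, hadjy⟩
      obtain ⟨-, hc⟩ := (cay_adj_iff H m y z0).mp hadjy
      obtain ⟨υ, εy, hεy, rfl⟩ := (mem_sstar_iff H m).mp hy
      obtain ⟨γ, εc, hεc, hceq⟩ := (mem_sstar_iff H m).mp hc
      have hzy : z0 = raachGen H m υ ^ εy * raachGen H m γ ^ εc := by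
        rw [← hceq]; exact (mul_inv_cancel_left _ _).symm
      have heq : raachGen H m σ ^ ε * raachGen H m τ ^ δ =
          raachGen H m υ ^ εy * raachGen H m γ ^ εc := by
        rw [← hzy, hz0_def, hs_def, ht_def]
      by_cases hυσ : υ = σ
      · by_cases hγτ : γ = τ
        · rw [hυσ, hγτ] at heq
          have hco := congrArg (co H m τ) heq
          rw [co_mul_zpow, if_neg (Ne.symm hne), if_pos rfl, co_mul_zpow,
            if_neg (Ne.symm hne), if_pos rfl, zero_add, zero_add] at hco
          have hdvd := coord_solve m (x := δ) (y := εc) (b := τ)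
            (by push_cast at hco ⊢; linear_combination hco)
          have hcT : raachGen H m τ ^ εc = raachGen H m τ ^ δ :=
            zpow_eq_of_units_dvd H m hm τ hεc hδ (dvd_sub_comm.mp hdvd)
          rw [hcT] at heq
          left
          rw [hυσ, hs_def]
          exact (mul_right_cancel heq).symm
        · exfalso
          have hco := congrArg (co H m τ) heq
          rw [co_mul_zpow, if_neg (Ne.symm hne), if_pos rfl, co_mul_zpow,
            if_neg (fun h => hne (hυσ ▸ h).symm), if_neg (fun h => hγτ h.symm),
            zero_add, add_zero] at hco
          have hdvd := coord_solve m (x := δ) (y := 0) (b := τ)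
            (by push_cast at hco ⊢; linear_combination hco)
          rw [sub_zero] at hdvd
          exact unit_not_dvd m hm τ hδ hdvd
      · by_cases hυτ : υ = τ
        · by_cases hγσ : γ = σ
          · rw [hυτ, hγσ] at heq
            have hco := congrArg (co H m σ) heq
            rw [co_mul_zpow, if_pos rfl, if_neg hne, co_mul_zpow,
              if_neg hne, if_pos rfl, add_zero, zero_add] at hco
            have hdvd := coord_solve m (x := ε) (y := εc) (b := σ)
              (by push_cast at hco ⊢; linear_combination hco)
            have hcS : raachGen H m σ ^ εc = raachGen H m σ ^ ε :=
              zpow_eq_of_units_dvd H m hm σ hεc hε (dvd_sub_comm.mp hdvd)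
            rw [hcS] at heq
            have heq2 : raachGen H m τ ^ δ * raachGen H m σ ^ ε =
                raachGen H m τ ^ εy * raachGen H m σ ^ ε := by
              rw [← heq]
              exact hcomm.eq.symm
            right
            rw [hυτ, ht_def]
            exact (mul_right_cancel heq2).symm
          · exfalso
            have hco := congrArg (co H m σ) heq
            rw [co_mul_zpow, if_pos rfl, if_neg hne, co_mul_zpow,
              if_neg (fun h => hne (hυτ ▸ h)), if_neg (fun h => hγσ h.symm),
              add_zero, add_zero] at hco
            have hdvd := coord_solve m (x := ε) (y := 0) (b := σ)
              (by push_cast at hco ⊢; linear_combination hco)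
            rw [sub_zero] at hdvd
            exact unit_not_dvd m hm σ hε hdvd
        · exfalso
          by_cases hγυ : γ = υ
          · rw [hγυ] at heq hzy
            have hco := congrArg (co H m υ) heq
            rw [co_mul_zpow, if_neg hυσ, if_neg hυτ,
              co_mul_zpow, if_pos rfl, if_pos rfl, add_zero] at hco
            have hdvd := coord_solve m (x := 0) (y := εy + εc) (b := υ)
              (by push_cast at hco ⊢; linear_combination hco)
            have hcY : raachGen H m υ ^ εc = raachGen H m υ ^ (-εy) :=
              zpow_eq_of_units_dvd H m hm υ hεc (by omega) (by
                have h2 := dvd_neg.mpr hdvd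
                have h3 : -(0 - (εy + εc)) = εc - (-εy) := by ring
                rwa [h3] at h2)
            apply hz0n1
            rw [hzy, hcY, ← geninv, mul_inv_cancel]
          · have hco := congrArg (co H m υ) heq
            rw [co_mul_zpow, if_neg hυσ, if_neg hυτ,
              co_mul_zpow, if_pos rfl, if_neg (fun h => hγυ h.symm), add_zero] at hco
            have hdvd := coord_solve m (x := 0) (y := εy) (b := υ)
              (by push_cast at hco ⊢; linear_combination hco)
            rw [zero_sub] at hdvd
            exact unit_not_dvd m hm υ hεy (dvd_neg.mp hdvd)
    · rintro (rfl | rfl)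
      · exact ⟨mem_s, hadj_s⟩
      · exact ⟨mem_t, hadj_t⟩
  have hdcount : dzMinus H m z0 = 2 := dz_eq_two H m z0 s t hst hset
  have hw : wS1' H m s t = 2⁻¹ := by
    apply wS1'_single H m s t z0 hst hz0sphere hadj_s hadj_t _ hdcount
    intro z hz h1 h2
    have := (cn_two_letter H m hm σ τ hne hε hδ z hz (by rwa [← hs_def]) (by rwa [← ht_def])).1
    rw [this, hz0_def, hs_def, ht_def]
  rw [hW, if_neg hnadj, hw]
  norm_num

lemma coeff_I3 (hm : ∀ s, m s = 2 ∨ m s = 3 ∨ m s = 4 ∨ m s = (⊤ : ℕ∞))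
    (σ : S) (hcase : m σ = 3) {ε : ℤ} (hε : ε = 1 ∨ ε = -1)
    (hne2 : raachGen H m σ ^ ε ≠ raachGen H m σ ^ (-ε)) :
    (apWeight H m (raachGen H m σ ^ ε) (raachGen H m σ ^ (-ε)) : ℝ) =
      2 * (if (cayRAACH H m).Adj (raachGen H m σ ^ ε) (raachGen H m σ ^ (-ε))
        then (1:ℝ) else 0) +
      2 * wS1' H m (raachGen H m σ ^ ε) (raachGen H m σ ^ (-ε)) := by
  have hn : (m σ).toNat = 3 := by rw [hcase]; rfl
  have hinv : raachGen H m σ ^ (-ε) = (raachGen H m σ ^ ε)⁻¹ := (geninv H m σ ε).symm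
  have horder : orderOf (raachGen H m σ ^ ε) = 3 := by
    rw [orderOf_gen_unit H m σ hε, hn]
  have hW : apWeight H m (raachGen H m σ ^ ε) (raachGen H m σ ^ (-ε)) = 2 := by
    simp only [apWeight]
    rw [if_neg (fun h => h.2.2 hinv),
      if_neg (fun h => absurd (horder.symm.trans h.2) (by norm_num)),
      if_pos ⟨hinv, horder⟩]
  have hadjst : (cayRAACH H m).Adj (raachGen H m σ ^ ε) (raachGen H m σ ^ (-ε)) := by
    rw [cay_adj_iff]
    refine ⟨Ne.symm hne2, ?_⟩
    rw [geninv, ← zpow_add]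
    rw [zpow_eq_of_dvd H m σ 3 hcase (x := -ε + -ε) (y := ε) (by omega)]
    exact (mem_sstar_iff H m).mpr ⟨σ, ε, hε, rfl⟩
  have hw0 : wS1' H m (raachGen H m σ ^ ε) (raachGen H m σ ^ (-ε)) = 0 := by
    apply wS1'_zero H m _ _ hne2
    rintro z hz ⟨h1, h2⟩
    have hzz := cn_one_letter H m hm σ hε hne2 z hz h1 h2
    obtain ⟨hzs, -, -⟩ := (mem_sphere2_iff H m hm z).mp hz
    apply hzs
    rw [hzz, ← zpow_add, zpow_eq_of_dvd H m σ 3 hcase (x := ε + ε) (y := -ε) (by omega)]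
    exact (mem_sstar_iff H m).mpr ⟨σ, -ε, by omega, rfl⟩
  rw [hW, if_pos hadjst, hw0]
  norm_num

lemma coeff_I4 (hm : ∀ s, m s = 2 ∨ m s = 3 ∨ m s = 4 ∨ m s = (⊤ : ℕ∞))
    (σ : S) (hcase : m σ = 4) {ε : ℤ} (hε : ε = 1 ∨ ε = -1)
    (hne2 : raachGen H m σ ^ ε ≠ raachGen H m σ ^ (-ε)) :
    (apWeight H m (raachGen H m σ ^ ε) (raachGen H m σ ^ (-ε)) : ℝ) =
      2 * (if (cayRAACH H m).Adj (raachGen H m σ ^ ε) (raachGen H m σ ^ (-ε))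
        then (1:ℝ) else 0) +
      2 * wS1' H m (raachGen H m σ ^ ε) (raachGen H m σ ^ (-ε)) := by
  have hn : (m σ).toNat = 4 := by rw [hcase]; rfl
  have hinv : raachGen H m σ ^ (-ε) = (raachGen H m σ ^ ε)⁻¹ := (geninv H m σ ε).symm
  have horder : orderOf (raachGen H m σ ^ ε) = 4 := by
    rw [orderOf_gen_unit H m σ hε, hn]
  set s := raachGen H m σ ^ ε with hs_def
  set t := raachGen H m σ ^ (-ε) with ht_def
  have mem_s : s ∈ Sstar H m := (mem_sstar_iff H m).mpr ⟨σ, ε, hε, rfl⟩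
  have mem_t : t ∈ Sstar H m := (mem_sstar_iff H m).mpr ⟨σ, -ε, by omega, rfl⟩
  have hW : apWeight H m s t = 1 := by
    simp only [apWeight]
    rw [if_neg (fun h => h.2.2 hinv), if_pos ⟨hinv, horder⟩]
  have hnadj : ¬ (cayRAACH H m).Adj s t := by
    rw [cay_adj_iff]
    rintro ⟨-, hmem⟩
    rw [hs_def, ht_def, geninv, ← zpow_add] at hmem
    exact gen_zpow_notstar H m hm σ (-ε + -ε)
      (fun e he => by rw [hn]; omega) hmem
  set z0 := s * s with hz0_def
  have hz0eq : z0 = raachGen H m σ ^ (ε + ε) := by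
    rw [hz0_def, hs_def, zpow_add]
  have hz0s : z0 ∉ Sstar H m := by
    rw [hz0eq]
    exact gen_zpow_notstar H m hm σ (ε + ε) (fun e he => by rw [hn]; omega)
  have hone : (1 : RAACH H m) = raachGen H m σ ^ (0 : ℤ) := (zpow_zero _).symm
  have hz0n1 : z0 ≠ 1 := by
    rw [hz0eq, hone]
    exact ne_zpow_of H m hm σ (by rw [hn]; omega)
  have hz0sphere : z0 ∈ sphere2 H m := by
    rw [mem_sphere2_iff H m hm]
    exact ⟨hz0s, hz0n1, s, mem_s, by rw [hz0_def, inv_mul_cancel_left]; exact mem_s⟩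
  have hz0nes : z0 ≠ s := by
    rw [hz0eq, hs_def]
    exact ne_zpow_of H m hm σ (by rw [hn]; omega)
  have hz0net : z0 ≠ t := by
    rw [hz0eq, ht_def]
    exact ne_zpow_of H m hm σ (by rw [hn]; omega)
  have hadj_s : (cayRAACH H m).Adj s z0 := by
    rw [cay_adj_iff]
    exact ⟨hz0nes, by rw [hz0_def, inv_mul_cancel_left]; exact mem_s⟩
  have htinv : t⁻¹ = raachGen H m σ ^ ε := by rw [ht_def, geninv, neg_neg]
  have hadj_t : (cayRAACH H m).Adj t z0 := by
    rw [cay_adj_iff]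
    refine ⟨hz0net, ?_⟩
    rw [hz0eq, htinv, ← zpow_add]
    rw [zpow_eq_of_dvd H m σ 4 hcase (x := ε + (ε + ε)) (y := -ε) (by omega)]
    exact mem_t
  have hne2' : s ≠ t := hne2
  have hset : ∀ y, (y ∈ Sstar H m ∧ (cayRAACH H m).Adj y z0) ↔ (y = s ∨ y = t) := by
    intro y
    constructor
    · rintro ⟨hy, hadjy⟩
      obtain ⟨-, hc⟩ := (cay_adj_iff H m y z0).mp hadjy
      obtain ⟨υ, εy, hεy, rfl⟩ := (mem_sstar_iff H m).mp hy
      by_cases hυσ : υ = σ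
      · rcases (show εy = ε ∨ εy = -ε by omega) with h | h
        · left; rw [hυσ, h, hs_def]
        · right; rw [hυσ, h, ht_def]
      · exfalso
        obtain ⟨γ, εc, hεc, hceq⟩ := (mem_sstar_iff H m).mp hc
        have hzy : z0 = raachGen H m υ ^ εy * raachGen H m γ ^ εc := by
          rw [← hceq]; exact (mul_inv_cancel_left _ _).symm
        have heq : raachGen H m σ ^ (ε + ε) =
            raachGen H m υ ^ εy * raachGen H m γ ^ εc := hz0eq.symm.trans hzy
        by_cases hγυ : γ = υ
        · rw [hγυ] at heq hzy
          have hco := congrArg (co H m υ) heq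
          rw [co_gen_zpow, if_neg hυσ, co_mul_zpow, if_pos rfl, if_pos rfl] at hco
          have hdvd := coord_solve m (x := 0) (y := εy + εc) (b := υ)
            (by push_cast at hco ⊢; linear_combination hco)
          have hcY : raachGen H m υ ^ εc = raachGen H m υ ^ (-εy) :=
            zpow_eq_of_units_dvd H m hm υ hεc (by omega) (by
              have h2 := dvd_neg.mpr hdvd
              have h3 : -(0 - (εy + εc)) = εc - (-εy) := by ring
              rwa [h3] at h2)
          apply hz0n1
          rw [hzy, hcY, ← geninv, mul_inv_cancel]
        · have hco := congrArg (co H m υ) heq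
          rw [co_gen_zpow, if_neg hυσ, co_mul_zpow, if_pos rfl,
            if_neg (fun h => hγυ h.symm), add_zero] at hco
          have hdvd := coord_solve m (x := 0) (y := εy) (b := υ)
            (by push_cast at hco ⊢; linear_combination hco)
          rw [zero_sub] at hdvd
          exact unit_not_dvd m hm υ hεy (dvd_neg.mp hdvd)
    · rintro (rfl | rfl)
      · exact ⟨mem_s, hadj_s⟩
      · exact ⟨mem_t, hadj_t⟩
  have hdcount : dzMinus H m z0 = 2 := dz_eq_two H m z0 s t hne2' hset
  have hw : wS1' H m s t = 2⁻¹ := by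
    apply wS1'_single H m s t z0 hne2' hz0sphere hadj_s hadj_t _ hdcount
    intro z hz h1 h2
    have := cn_one_letter H m hm σ hε hne2 z hz (by rwa [← hs_def]) (by rwa [← ht_def])
    rw [this, hz0_def, hs_def]
  rw [hW, if_neg hnadj, hw]
  norm_num

lemma coeff_I0 (hm : ∀ s, m s = 2 ∨ m s = 3 ∨ m s = 4 ∨ m s = (⊤ : ℕ∞))
    (σ : S) (hcase : m σ = ⊤) {ε : ℤ} (hε : ε = 1 ∨ ε = -1)
    (hne2 : raachGen H m σ ^ ε ≠ raachGen H m σ ^ (-ε)) :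
    (apWeight H m (raachGen H m σ ^ ε) (raachGen H m σ ^ (-ε)) : ℝ) =
      2 * (if (cayRAACH H m).Adj (raachGen H m σ ^ ε) (raachGen H m σ ^ (-ε))
        then (1:ℝ) else 0) +
      2 * wS1' H m (raachGen H m σ ^ ε) (raachGen H m σ ^ (-ε)) := by
  have hn : (m σ).toNat = 0 := by rw [hcase]; rfl
  have hinv : raachGen H m σ ^ (-ε) = (raachGen H m σ ^ ε)⁻¹ := (geninv H m σ ε).symm
  have horder : orderOf (raachGen H m σ ^ ε) = 0 := by
    rw [orderOf_gen_unit H m σ hε, hn]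
  have hW : apWeight H m (raachGen H m σ ^ ε) (raachGen H m σ ^ (-ε)) = 0 := by
    simp only [apWeight]
    rw [if_neg (fun h => h.2.2 hinv),
      if_neg (fun h => absurd (horder.symm.trans h.2) (by norm_num)),
      if_neg (fun h => absurd (horder.symm.trans h.2) (by norm_num))]
  have hnadj : ¬ (cayRAACH H m).Adj (raachGen H m σ ^ ε) (raachGen H m σ ^ (-ε)) := by
    rw [cay_adj_iff]
    rintro ⟨-, hmem⟩
    rw [geninv, ← zpow_add] at hmem
    exact gen_zpow_notstar H m hm σ (-ε + -ε) (fun e he => by rw [hn]; omega) hmem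
  have hw0 : wS1' H m (raachGen H m σ ^ ε) (raachGen H m σ ^ (-ε)) = 0 := by
    apply wS1'_zero H m _ _ hne2
    rintro z hz ⟨h1, h2⟩
    have hzz := cn_one_letter H m hm σ hε hne2 z hz h1 h2
    obtain ⟨-, hmem⟩ := (cay_adj_iff H m _ z).mp h2
    rw [hzz, geninv, neg_neg, ← zpow_add, ← zpow_add] at hmem
    exact gen_zpow_notstar H m hm σ (ε + (ε + ε)) (fun e he => by rw [hn]; omega) hmem
  rw [hW, if_neg hnadj, hw0]
  norm_num

end Aux

/-- **Lemma 4.3:** the identity `Δ_{H*} = 2 Δ_{S₁(e)} + 2 Δ_{S₁'(e)}` between Laplacians on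
`S* = S₁(e)`. -/
theorem lap_associated_pair_identity {S : Type} [Fintype S] (H : SimpleGraph S) (m : S → ℕ∞)
    (hm : ∀ s, m s = 2 ∨ m s = 3 ∨ m s = 4 ∨ m s = (⊤ : ℕ∞)) :
    ∀ (f : RAACH H m → ℝ), ∀ s ∈ Sstar H m,
      lapHstar H m f s = 2 * lapS1 H m f s + 2 * lapS1' H m f s := by
  intro f s hs
  have hfin : (Sstar H m).Finite := by
    apply Set.Finite.subset (Set.finite_range
      (fun p : S × Bool => if p.2 then raachGen H m p.1 else (raachGen H m p.1)⁻¹))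
    rintro x ⟨a, h | h⟩
    · exact ⟨(a, true), h.symm⟩
    · exact ⟨(a, false), h.symm⟩
  have hcoe : (hfin.toFinset : Set (RAACH H m)) = Sstar H m := hfin.coe_toFinset
  simp only [lapHstar, lapS1, lapS1']
  rw [← hcoe, finsum_mem_coe_finset, finsum_mem_coe_finset, finsum_mem_coe_finset,
    Finset.mul_sum, Finset.mul_sum, ← Finset.sum_add_distrib]
  apply Finset.sum_congr rfl
  intro t ht
  have htS : t ∈ Sstar H m := hfin.mem_toFinset.mp ht
  by_cases hts : t = s
  · subst hts
    simp
  · suffices h : (apWeight H m s t : ℝ) =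
        2 * (if (cayRAACH H m).Adj s t then (1:ℝ) else 0) + 2 * wS1' H m s t by
      rw [h]; ring
    obtain ⟨σ, ε, hε, hs_eq⟩ := (mem_sstar_iff H m).mp hs
    obtain ⟨τ, δ, hδ, ht_eq⟩ := (mem_sstar_iff H m).mp htS
    subst hs_eq
    subst ht_eq
    by_cases hστ : τ = σ
    · rw [hστ] at hts ⊢
      have hδε : δ = -ε := by
        rcases hε with rfl | rfl <;> rcases hδ with rfl | rfl <;>
          first | omega | exact absurd rfl hts
      subst hδε
      rcases hm σ with hcase | hcase | hcase | hcase
      · exact absurd (zpow_eq_of_dvd H m σ 2 hcase (by omega)) hts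
      · exact coeff_I3 H m hm σ hcase hε (fun h => hts h.symm)
      · exact coeff_I4 H m hm σ hcase hε (fun h => hts h.symm)
      · exact coeff_I0 H m hm σ hcase hε (fun h => hts h.symm)
    · by_cases hadj : H.Adj σ τ
      · exact coeff_II H m hm σ τ (fun h => hστ h.symm) hadj hε hδ
      · exact coeff_III H m hm σ τ (fun h => hστ h.symm) hadj hε hδ
end

section
/- Let Γ be a RAACH with generating set S, defining graph (H,m) and associated pair (H*,w), and set D = |S*|. If either R₃ = ∅ and D ≥ 2, or R₃ = S and D ≥ 4, then the second smallest eigenvalue of −Δ_{H*} satisfies λ₂(−Δ_{H*}) ≤ D. -/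
set_option linter.unusedVariables false

attribute [local instance] Classical.propDecidable

open scoped commutatorElement

lemma cond1_symm {G : Type*} [Group G] (s t : G) :
    (Commute s t ∧ t ≠ s ∧ t ≠ s⁻¹) ↔ (Commute t s ∧ s ≠ t ∧ s ≠ t⁻¹) := by
  constructor <;> rintro ⟨hc, hne, hni⟩ <;>
    exact ⟨hc.symm, hne.symm, fun h => hni (by rw [h, inv_inv])⟩

lemma cond_ord_symm {G : Type*} [Group G] (s t : G) (k : ℕ) :
    (t = s⁻¹ ∧ orderOf s = k) ↔ (s = t⁻¹ ∧ orderOf t = k) := by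
  constructor <;> rintro ⟨h, ho⟩ <;> subst h <;> simp [orderOf_inv, ho]

lemma apWeight_symm {S : Type*} (H : SimpleGraph S) (m : S → ℕ∞) (s t : RAACH H m) :
    apWeight H m s t = apWeight H m t s := by
  unfold apWeight
  by_cases h1 : Commute s t ∧ t ≠ s ∧ t ≠ s⁻¹
  · rw [if_pos h1, if_pos ((cond1_symm s t).mp h1)]
  · rw [if_neg h1, if_neg (fun h => h1 ((cond1_symm t s).mp h))]
    by_cases h2 : t = s⁻¹ ∧ orderOf s = 4
    · rw [if_pos h2, if_pos ((cond_ord_symm s t 4).mp h2)]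
    · rw [if_neg h2, if_neg (fun h => h2 ((cond_ord_symm t s 4).mp h))]
      by_cases h3 : t = s⁻¹ ∧ orderOf s = 3
      · rw [if_pos h3, if_pos ((cond_ord_symm s t 3).mp h3)]
      · rw [if_neg h3, if_neg (fun h => h3 ((cond_ord_symm t s 3).mp h))]

lemma sstar_finite {S : Type*} [Fintype S] (H : SimpleGraph S) (m : S → ℕ∞) :
    (Sstar H m).Finite := by
  have hsub : Sstar H m ⊆
      Set.range (raachGen H m) ∪ Set.range (fun s => (raachGen H m s)⁻¹) := by
    rintro g ⟨s, h | h⟩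
    · exact Or.inl ⟨s, h.symm⟩
    · exact Or.inr ⟨s, h.symm⟩
  exact ((Set.finite_range _).union (Set.finite_range _)).subset hsub

noncomputable instance sstarFintype {S : Type*} [Fintype S] (H : SimpleGraph S) (m : S → ℕ∞) :
    Fintype (Sstar H m) :=
  (sstar_finite H m).fintype

/-- The matrix of `-Δ_{H*}`, the negative of the weighted Laplacian of the associated pair
`(H*, w)` (with vertex measure ≡ 1), indexed by `S*`. -/
noncomputable def negLapMat {S : Type*} [Fintype S] (H : SimpleGraph S) (m : S → ℕ∞) :
    Matrix (Sstar H m) (Sstar H m) ℝ :=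
  fun s t => if s = t then ∑ u : Sstar H m, (apWeight H m s.1 u.1 : ℝ)
             else -(apWeight H m s.1 t.1 : ℝ)

lemma negLapMat_isHermitian {S : Type*} [Fintype S] (H : SimpleGraph S) (m : S → ℕ∞) :
    (negLapMat H m).IsHermitian := by
  show (negLapMat H m).conjTranspose = negLapMat H m
  ext s t
  simp only [Matrix.conjTranspose_apply, star_trivial]
  unfold negLapMat
  by_cases h : s = t
  · subst h; rfl
  · rw [if_neg (Ne.symm h), if_neg h, apWeight_symm H m t.1 s.1]

/-- The second smallest element (counted with multiplicity) of a finite family of reals;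
applied to the eigenvalues of a symmetric matrix it is the second smallest eigenvalue. -/
noncomputable def lambda2 {n : Type*} [Fintype n] (μ : n → ℝ) : ℝ :=
  ((Finset.univ.val.map μ).sort (· ≤ ·)).getD 1 0


section Helpers
open Matrix

lemma sorted_getD_one_le {l : List ℝ} (hs : l.Pairwise (· ≤ ·)) {x : ℝ}
    (h2 : 2 ≤ (l.filter (fun a => decide (a ≤ x))).length) : l.getD 1 0 ≤ x := by
  match l, hs with
  | [], _ => simp at h2
  | [a], _ =>
    exfalso
    have := List.length_filter_le (fun a => decide (a ≤ x)) [a]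
    simp only [List.length_singleton] at this
    omega
  | a :: b :: t, hs =>
    show b ≤ x
    by_contra hb
    push_neg at hb
    have hnil : (b :: t).filter (fun a => decide (a ≤ x)) = [] := by
      rw [List.filter_eq_nil_iff]
      intro y hy
      simp only [decide_eq_true_eq]
      intro hyx
      rcases List.mem_cons.mp hy with rfl | hy'
      · exact absurd hyx (not_le.mpr hb)
      · have : b ≤ y := (List.pairwise_cons.mp (List.pairwise_cons.mp hs).2).1 y hy'
        linarith
    rw [List.filter_cons, hnil] at h2
    split_ifs at h2 <;> simp_all

lemma lambda2_le_of_two {n : Type*} [Fintype n] (μ : n → ℝ) {x : ℝ} {i j : n}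
    (hij : i ≠ j) (hi : μ i ≤ x) (hj : μ j ≤ x) : lambda2 μ ≤ x := by
  apply sorted_getD_one_le (Multiset.pairwise_sort _ _)
  have key : ((Finset.univ.val.map μ : Multiset ℝ).filter (fun a => a ≤ x)).card ≥ 2 := by
    have hsub : ({i, j} : Finset n).val.map μ ≤ Finset.univ.val.map μ :=
      Multiset.map_le_map (Finset.val_le_iff.mpr (Finset.subset_univ _))
    have : (({i, j} : Finset n).val.map μ).filter (fun a => a ≤ x) ≤
        (Finset.univ.val.map μ).filter (fun a => a ≤ x) := Multiset.filter_le_filter _ hsub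
    have hcard := Multiset.card_le_card this
    have : (({i, j} : Finset n).val.map μ).filter (fun a => a ≤ x) =
        ({i, j} : Finset n).val.map μ := by
      rw [Multiset.filter_eq_self]
      intro a ha
      obtain ⟨k, hk, rfl⟩ := Multiset.mem_map.mp ha
      rcases Finset.mem_insert.mp (Finset.mem_val.mp hk) with rfl | hk'
      · exact hi
      · rw [Finset.mem_singleton.mp hk']; exact hj
    rw [this] at hcard
    rw [Multiset.card_map] at hcard
    have h2 : ({i, j} : Finset n).card = 2 := Finset.card_pair hij
    rw [Finset.card] at h2
    omega
  have := Multiset.sort_eq (Finset.univ.val.map μ) (· ≤ ·)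
  rw [← this] at key
  rw [Multiset.filter_coe, Multiset.coe_card] at key
  exact key

lemma coords_two_le {n : Type*} [Fintype n] (μ g ζ : n → ℝ) (c : ℝ) (hc : 0 ≤ c)
    (hζeig : ∀ i, μ i * ζ i = 0) (hζ0 : ζ ≠ 0) (hg0 : g ≠ 0)
    (horth : ∑ i, g i * ζ i = 0)
    (hray : ∑ i, g i * (μ i * g i) ≤ c * ∑ i, g i * g i) :
    ∃ i j : n, i ≠ j ∧ μ i ≤ c ∧ μ j ≤ c := by
  by_contra hcon
  push_neg at hcon
  obtain ⟨i₀, hi₀⟩ := Function.ne_iff.mp hζ0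
  simp only [Pi.zero_apply] at hi₀
  have hμi₀ : μ i₀ = 0 := by
    rcases mul_eq_zero.mp (hζeig i₀) with h' | h'
    · exact h'
    · exact absurd h' hi₀
  have hμi₀c : μ i₀ ≤ c := hμi₀ ▸ hc
  have hgt : ∀ i, i ≠ i₀ → c < μ i := fun i hi => hcon i₀ i (Ne.symm hi) hμi₀c
  have hζz : ∀ i, i ≠ i₀ → ζ i = 0 := by
    intro i hi
    rcases mul_eq_zero.mp (hζeig i) with h' | h'
    · exact absurd h' (ne_of_gt (lt_of_le_of_lt hc (hgt i hi)))
    · exact h'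
  have hgi₀ : g i₀ = 0 := by
    have hss : ∑ i, g i * ζ i = g i₀ * ζ i₀ := by
      apply Finset.sum_eq_single
      · intro i _ hi; rw [hζz i hi, mul_zero]
      · intro h; exact absurd (Finset.mem_univ i₀) h
    rw [hss] at horth
    rcases mul_eq_zero.mp horth with h' | h'
    · exact h'
    · exact absurd h' hi₀
  obtain ⟨k, hk⟩ := Function.ne_iff.mp hg0
  simp only [Pi.zero_apply] at hk
  have hki₀ : k ≠ i₀ := fun h => hk (h ▸ hgi₀)
  have hstrict : c * ∑ i, g i * g i < ∑ i, g i * (μ i * g i) := by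
    rw [Finset.mul_sum]
    apply Finset.sum_lt_sum
    · intro i _
      by_cases hgi : g i = 0
      · simp [hgi]
      · have hi : i ≠ i₀ := fun h => hgi (h ▸ hgi₀)
        have h1 := le_of_lt (hgt i hi)
        nlinarith [mul_self_nonneg (g i)]
    · refine ⟨k, Finset.mem_univ k, ?_⟩
      have h1 := hgt k hki₀
      have h2 : 0 < g k * g k := mul_self_pos.mpr hk
      nlinarith
  linarith

lemma spectral_two_le {n : Type} [Fintype n] [DecidableEq n] {A : Matrix n n ℝ}
    (hA : A.IsHermitian) {z f : n → ℝ} {c : ℝ} (hc : 0 ≤ c)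
    (hz : A *ᵥ z = 0) (hz0 : z ≠ 0) (horth : f ⬝ᵥ z = 0) (hf0 : f ≠ 0)
    (hray : f ⬝ᵥ (A *ᵥ f) ≤ c * (f ⬝ᵥ f)) :
    ∃ i j : n, i ≠ j ∧ hA.eigenvalues i ≤ c ∧ hA.eigenvalues j ≤ c := by
  set U : Matrix n n ℝ := (hA.eigenvectorUnitary : Matrix n n ℝ) with hUdef
  have hU1 : U * star U = 1 := (Matrix.mem_unitaryGroup_iff).mp hA.eigenvectorUnitary.2
  have hU2 : star U * U = 1 := (Matrix.mem_unitaryGroup_iff').mp hA.eigenvectorUnitary.2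
  have hstarU : star U = Uᵀ := by
    rw [Matrix.star_eq_conjTranspose]
    ext i j
    simp [Matrix.conjTranspose_apply]
  have hdiag : A = U * Matrix.diagonal hA.eigenvalues * star U := by
    have := hA.spectral_theorem
    rw [Unitary.conjStarAlgAut_apply] at this
    exact this
  set μ := hA.eigenvalues with hμdef
  set g := star U *ᵥ f with hgdef
  set ζ := star U *ᵥ z with hζdef
  clear_value U μ g ζ
  have hfrec : f = U *ᵥ g := by
    rw [hgdef, Matrix.mulVec_mulVec, hU1, Matrix.one_mulVec]
  have hzrec : z = U *ᵥ ζ := by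
    rw [hζdef, Matrix.mulVec_mulVec, hU1, Matrix.one_mulVec]
  have hadj : ∀ (v y : n → ℝ), (U *ᵥ v) ⬝ᵥ y = v ⬝ᵥ (star U *ᵥ y) := by
    intro v y
    rw [hstarU]
    simp only [dotProduct, Matrix.mulVec, dotProduct, Matrix.transpose_apply,
      Finset.sum_mul, Finset.mul_sum]
    rw [Finset.sum_comm]
    exact Finset.sum_congr rfl fun i _ => Finset.sum_congr rfl fun j _ => by ring
  have hnorm : f ⬝ᵥ f = g ⬝ᵥ g := by
    conv_lhs => rw [hfrec]
    rw [hadj, Matrix.mulVec_mulVec, hU2, Matrix.one_mulVec]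
  have horth' : g ⬝ᵥ ζ = 0 := by
    rw [← horth]
    conv_rhs => rw [hfrec]
    rw [hadj, ← hζdef]
  have hmulζ : Matrix.diagonal μ *ᵥ ζ = 0 := by
    have h1 : star U * A = Matrix.diagonal μ * star U := by
      conv_lhs => rw [hdiag]
      rw [← Matrix.mul_assoc, ← Matrix.mul_assoc, hU2, Matrix.one_mul]
    calc Matrix.diagonal μ *ᵥ ζ = (Matrix.diagonal μ * star U) *ᵥ z := by
          rw [hζdef, Matrix.mulVec_mulVec]
    _ = (star U * A) *ᵥ z := by rw [h1]
    _ = star U *ᵥ (A *ᵥ z) := (Matrix.mulVec_mulVec _ _ _).symm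
    _ = 0 := by rw [hz, Matrix.mulVec_zero]
  have hζeig : ∀ i, μ i * ζ i = 0 := by
    intro i
    have := congrFun hmulζ i
    rwa [Matrix.mulVec_diagonal] at this
  have hAf : A *ᵥ f = U *ᵥ (Matrix.diagonal μ *ᵥ g) := by
    calc A *ᵥ f = (U * (Matrix.diagonal μ * star U)) *ᵥ f := by rw [hdiag, Matrix.mul_assoc]
    _ = U *ᵥ (Matrix.diagonal μ *ᵥ (star U *ᵥ f)) := by
          simp only [Matrix.mulVec_mulVec, Matrix.mul_assoc]
    _ = U *ᵥ (Matrix.diagonal μ *ᵥ g) := by rw [← hgdef]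
  have hray' : ∑ i, g i * (μ i * g i) ≤ c * ∑ i, g i * g i := by
    calc ∑ i, g i * (μ i * g i) = g ⬝ᵥ (Matrix.diagonal μ *ᵥ g) := by
          simp [dotProduct, Matrix.mulVec_diagonal]
    _ = (U *ᵥ g) ⬝ᵥ (U *ᵥ (Matrix.diagonal μ *ᵥ g)) := by
          rw [hadj g (U *ᵥ (Matrix.diagonal μ *ᵥ g)), Matrix.mulVec_mulVec, hU2,
            Matrix.one_mulVec]
    _ = f ⬝ᵥ (A *ᵥ f) := by rw [← hfrec, ← hAf]
    _ ≤ c * (f ⬝ᵥ f) := hray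
    _ = c * ∑ i, g i * g i := by rw [hnorm]; simp [dotProduct]
  have hg0 : g ≠ 0 := fun h => hf0 (by rw [hfrec, h, Matrix.mulVec_zero])
  have hζ0 : ζ ≠ 0 := fun h => hz0 (by rw [hzrec, h, Matrix.mulVec_zero])
  exact coords_two_le μ g ζ c hc hζeig hζ0 hg0 horth' hray'
lemma apWeight_self {S : Type*} (H : SimpleGraph S) (m : S → ℕ∞) (s : RAACH H m) :
    apWeight H m s s = 0 := by
  unfold apWeight
  have h1 : ¬(Commute s s ∧ s ≠ s ∧ s ≠ s⁻¹) := fun h => h.2.1 rfl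
  rw [if_neg h1]
  have horder : ∀ k : ℕ, 3 ≤ k → ¬(s = s⁻¹ ∧ orderOf s = k) := by
    rintro k hk ⟨h, ho⟩
    have hs2 : s ^ 2 = 1 := by rw [pow_two]; nth_rewrite 2 [h]; exact mul_inv_cancel s
    have := orderOf_dvd_of_pow_eq_one hs2
    rw [ho] at this
    have := Nat.le_of_dvd (by norm_num) this
    omega
  rw [if_neg (horder 4 (by norm_num)), if_neg (horder 3 (by norm_num))]

lemma apWeight_le_one_or {S : Type*} (H : SimpleGraph S) (m : S → ℕ∞) (s t : RAACH H m) :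
    apWeight H m s t ≤ 1 ∨ (t = s⁻¹ ∧ orderOf s = 3) := by
  unfold apWeight
  split_ifs with h1 h2 h3
  · exact Or.inl le_rfl
  · exact Or.inl le_rfl
  · exact Or.inr h3
  · exact Or.inl (by norm_num)

lemma negLapMat_entry {S : Type*} [Fintype S] (H : SimpleGraph S) (m : S → ℕ∞)
    (s t : Sstar H m) :
    negLapMat H m s t =
      (if s = t then (∑ u : Sstar H m, (apWeight H m s.1 u.1 : ℝ)) else 0)
        - (apWeight H m s.1 t.1 : ℝ) := by
  unfold negLapMat
  by_cases h : s = t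
  · subst h
    rw [if_pos rfl, if_pos rfl, apWeight_self]
    simp
  · rw [if_neg h, if_neg h, zero_sub]

lemma negLapMat_mulVec {S : Type*} [Fintype S] (H : SimpleGraph S) (m : S → ℕ∞)
    (f : Sstar H m → ℝ) (s : Sstar H m) :
    (negLapMat H m *ᵥ f) s =
      (∑ u : Sstar H m, (apWeight H m s.1 u.1 : ℝ)) * f s
        - ∑ t : Sstar H m, (apWeight H m s.1 t.1 : ℝ) * f t := by
  show (∑ t, negLapMat H m s t * f t) = _
  simp only [negLapMat_entry, sub_mul, ite_mul, zero_mul, Finset.sum_sub_distrib,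
    Finset.sum_ite_eq, Finset.mem_univ, if_true]

lemma negLapMat_rowsum {S : Type*} [Fintype S] (H : SimpleGraph S) (m : S → ℕ∞) :
    negLapMat H m *ᵥ (fun _ => (1:ℝ)) = 0 := by
  funext s
  rw [negLapMat_mulVec]
  simp

lemma negLapMat_quad {S : Type*} [Fintype S] (H : SimpleGraph S) (m : S → ℕ∞)
    (f : Sstar H m → ℝ) :
    2 * (f ⬝ᵥ (negLapMat H m *ᵥ f)) =
      ∑ s : Sstar H m, ∑ t : Sstar H m, (apWeight H m s.1 t.1 : ℝ) * (f s - f t)^2 := by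
  have hsymm : ∀ s t : Sstar H m, (apWeight H m s.1 t.1 : ℝ) = (apWeight H m t.1 s.1 : ℝ) :=
    fun s t => by rw [apWeight_symm]
  have hlhs : f ⬝ᵥ (negLapMat H m *ᵥ f) =
      (∑ s : Sstar H m, ∑ u : Sstar H m, (apWeight H m s.1 u.1 : ℝ) * (f s * f s))
        - ∑ s : Sstar H m, ∑ t : Sstar H m, (apWeight H m s.1 t.1 : ℝ) * (f s * f t) := by
    unfold dotProduct
    simp only [negLapMat_mulVec, mul_sub, Finset.sum_sub_distrib, Finset.mul_sum]
    congr 1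
    · apply Finset.sum_congr rfl; intro s _
      rw [Finset.sum_mul, Finset.mul_sum]
      apply Finset.sum_congr rfl; intro u _; ring
    · apply Finset.sum_congr rfl; intro s _
      apply Finset.sum_congr rfl; intro t _; ring
  have hmid : ∑ s : Sstar H m, ∑ t : Sstar H m, (apWeight H m s.1 t.1 : ℝ) * (f t * f t)
      = ∑ s : Sstar H m, ∑ t : Sstar H m, (apWeight H m s.1 t.1 : ℝ) * (f s * f s) := by
    rw [Finset.sum_comm]
    apply Finset.sum_congr rfl; intro s _
    apply Finset.sum_congr rfl; intro t _
    rw [hsymm]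
  calc 2 * (f ⬝ᵥ (negLapMat H m *ᵥ f))
      = 2 * ((∑ s : Sstar H m, ∑ u : Sstar H m, (apWeight H m s.1 u.1 : ℝ) * (f s * f s))
        - ∑ s : Sstar H m, ∑ t : Sstar H m, (apWeight H m s.1 t.1 : ℝ) * (f s * f t)) := by
        rw [hlhs]
  _ = (∑ s : Sstar H m, ∑ t : Sstar H m, (apWeight H m s.1 t.1 : ℝ) * (f s * f s))
        + (∑ s : Sstar H m, ∑ t : Sstar H m, (apWeight H m s.1 t.1 : ℝ) * (f t * f t))
        - 2 * ∑ s : Sstar H m, ∑ t : Sstar H m, (apWeight H m s.1 t.1 : ℝ) * (f s * f t) := by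
        rw [hmid]; ring
  _ = ∑ s : Sstar H m, ∑ t : Sstar H m, ((apWeight H m s.1 t.1 : ℝ) * (f s * f s)
        + (apWeight H m s.1 t.1 : ℝ) * (f t * f t)
        - 2 * ((apWeight H m s.1 t.1 : ℝ) * (f s * f t))) := by
        simp only [Finset.sum_add_distrib, Finset.sum_sub_distrib, ← Finset.mul_sum]
  _ = ∑ s : Sstar H m, ∑ t : Sstar H m, (apWeight H m s.1 t.1 : ℝ) * (f s - f t)^2 := by
        apply Finset.sum_congr rfl; intro s _
        apply Finset.sum_congr rfl; intro t _
        ring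

lemma complete_identity {n : Type*} [Fintype n] (f : n → ℝ) :
    ∑ s : n, ∑ t : n, (f s - f t)^2 =
      2 * (Fintype.card n : ℝ) * (∑ s : n, f s * f s) - 2 * (∑ s : n, f s)^2 := by
  have h : ∀ s : n, ∑ t : n, (f s - f t)^2 =
      (Fintype.card n : ℝ) * (f s * f s) + (∑ t : n, f t * f t) - 2 * f s * ∑ t : n, f t := by
    intro s
    calc ∑ t : n, (f s - f t)^2 = ∑ t : n, ((f s * f s) + (f t * f t) - 2 * f s * f t) := by
          apply Finset.sum_congr rfl; intro t _; ring
    _ = _ := by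
          simp only [Finset.sum_add_distrib, Finset.sum_sub_distrib, Finset.sum_const,
            Finset.card_univ, nsmul_eq_mul, ← Finset.mul_sum, mul_assoc]
  calc ∑ s : n, ∑ t : n, (f s - f t)^2
      = ∑ s : n, ((Fintype.card n : ℝ) * (f s * f s) + (∑ t : n, f t * f t)
          - 2 * f s * ∑ t : n, f t) := by
        apply Finset.sum_congr rfl; intro s _; exact h s
  _ = (Fintype.card n : ℝ) * (∑ s : n, f s * f s) + (Fintype.card n : ℝ) * (∑ t : n, f t * f t)
        - 2 * (∑ s : n, f s) * (∑ t : n, f t) := by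
        simp only [Finset.sum_add_distrib, Finset.sum_sub_distrib, Finset.sum_const,
          Finset.card_univ, nsmul_eq_mul, ← Finset.mul_sum, ← Finset.sum_mul]
  _ = _ := by ring

lemma master_bound {S : Type} [Fintype S] (H : SimpleGraph S) (m : S → ℕ∞)
    (f : Sstar H m → ℝ) (hf0 : f ≠ 0) (hsum : ∑ x : Sstar H m, f x = 0)
    (hw : ∀ s t : Sstar H m, (apWeight H m s.1 t.1 : ℝ) * (f s - f t)^2 ≤ (f s - f t)^2) :
    lambda2 (negLapMat_isHermitian H m).eigenvalues ≤ (Nat.card (Sstar H m) : ℝ) := by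
  have hne : Nonempty (Sstar H m) := by
    by_contra h
    exact hf0 (funext fun x => absurd ⟨x⟩ h)
  set c : ℝ := (Nat.card (Sstar H m) : ℝ) with hcdef
  have hcard : c = (Fintype.card (Sstar H m) : ℝ) := by rw [hcdef, Nat.card_eq_fintype_card]
  have hz0 : (fun _ : Sstar H m => (1:ℝ)) ≠ 0 := by
    intro h
    have := congrFun h (Classical.arbitrary _)
    simp at this
  have horth : f ⬝ᵥ (fun _ => (1:ℝ)) = 0 := by
    simpa [dotProduct] using hsum
  have hray : f ⬝ᵥ (negLapMat H m *ᵥ f) ≤ c * (f ⬝ᵥ f) := by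
    have h1 := negLapMat_quad H m f
    have h2 : ∑ s : Sstar H m, ∑ t : Sstar H m, (apWeight H m s.1 t.1 : ℝ) * (f s - f t)^2
        ≤ ∑ s : Sstar H m, ∑ t : Sstar H m, (f s - f t)^2 :=
      Finset.sum_le_sum fun s _ => Finset.sum_le_sum fun t _ => hw s t
    have h3 := complete_identity f
    have h4 : f ⬝ᵥ f = ∑ s : Sstar H m, f s * f s := rfl
    have h5 : (∑ s : Sstar H m, f s)^2 = 0 := by rw [hsum]; ring
    rw [h4, hcard]
    linarith
  obtain ⟨i, j, hij, hi, hj⟩ := spectral_two_le (negLapMat_isHermitian H m)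
    (Nat.cast_nonneg _) (negLapMat_rowsum H m) hz0 horth hf0 hray
  exact lambda2_le_of_two _ hij hi hj

lemma sstar_inv_s12 {S : Type*} {H : SimpleGraph S} {m : S → ℕ∞} {g : RAACH H m}
    (hg : g ∈ Sstar H m) : g⁻¹ ∈ Sstar H m := by
  obtain ⟨s, h | h⟩ := hg
  · exact ⟨s, Or.inr (by rw [h])⟩
  · exact ⟨s, Or.inl (by rw [h, inv_inv])⟩

lemma raach_pow {S : Type*} (H : SimpleGraph S) (m : S → ℕ∞) (s : S) (k : ℕ)
    (hk : m s = (k : ℕ∞)) : (raachGen H m s) ^ k = 1 := by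
  show (PresentedGroup.mk (raachRels H m) (FreeGroup.of s)) ^ k = 1
  rw [← map_pow]
  have hmem : FreeGroup.of s ^ k ∈ raachRels H m := Or.inl ⟨s, k, hk, rfl⟩
  exact (QuotientGroup.eq_one_iff _).mpr (Subgroup.subset_normalClosure hmem)

lemma raach_pow_ne_one {S : Type*} (H : SimpleGraph S) (m : S → ℕ∞) (s : S)
    (hs : m s = ⊤) (k : ℕ) (hk : k ≠ 0) : (raachGen H m s) ^ k ≠ 1 := by
  classical
  set fZ : S → Multiplicative ℤ :=
    fun t => if m t = ⊤ then Multiplicative.ofAdd (1 : ℤ) else 1 with hfZ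
  have hrels : ∀ r ∈ raachRels H m, FreeGroup.lift fZ r = 1 := by
    rintro r (⟨t, k', hk', rfl⟩ | ⟨t, u, hadj, rfl⟩)
    · rw [map_pow, FreeGroup.lift_apply_of]
      have hnot : m t ≠ ⊤ := by rw [hk']; exact ENat.coe_ne_top k'
      rw [hfZ]
      simp [hnot]
    · rw [map_commutatorElement]
      exact commutatorElement_eq_one_iff_commute.mpr (Commute.all _ _)
  intro hpow
  have h1 := congrArg (PresentedGroup.toGroup hrels) hpow
  rw [map_pow, _root_.map_one] at h1
  have h2 : PresentedGroup.toGroup hrels (raachGen H m s) = Multiplicative.ofAdd (1 : ℤ) := by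
    show PresentedGroup.toGroup hrels (PresentedGroup.of s) = _
    rw [PresentedGroup.toGroup.of, hfZ]
    simp [hs]
  rw [h2] at h1
  have h3 := congrArg Multiplicative.toAdd h1
  simp at h3
  exact hk h3

lemma ord_ne_three {S : Type*} (H : SimpleGraph S) (m : S → ℕ∞)
    (hm : ∀ s, m s = 2 ∨ m s = 3 ∨ m s = 4 ∨ m s = (⊤ : ℕ∞))
    (hR3 : {s : S | m s = 3} = ∅) (a : RAACH H m) (ha : a ∈ Sstar H m)
    (hne : a ≠ a⁻¹) : orderOf a ≠ 3 := by
  obtain ⟨s, hs⟩ := ha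
  have hms : m s ≠ 3 := by
    intro hcon
    have : s ∈ {s : S | m s = 3} := hcon
    rw [hR3] at this
    exact this
  have horda : orderOf a = orderOf (raachGen H m s) := by
    rcases hs with rfl | rfl
    · rfl
    · exact orderOf_inv _
  rcases hm s with h2 | h3 | h4 | htop
  · exfalso
    have hpow := raach_pow H m s 2 (by exact_mod_cast h2)
    have hinv : (raachGen H m s)⁻¹ = raachGen H m s := by
      apply inv_eq_of_mul_eq_one_left
      rw [← pow_two]; exact hpow
    apply hne
    rcases hs with rfl | rfl
    · rw [hinv]
    · rw [inv_inv, hinv]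
  · exact absurd h3 hms
  · intro hord
    have hpow := raach_pow H m s 4 (by exact_mod_cast h4)
    have hdvd := orderOf_dvd_of_pow_eq_one hpow
    rw [← horda, hord] at hdvd
    norm_num at hdvd
  · intro hord
    apply raach_pow_ne_one H m s htop 3 (by norm_num)
    have h3 : orderOf (raachGen H m s) = 3 := by rw [← horda, hord]
    rw [← h3]
    exact pow_orderOf_eq_one _

/-- Test function supported on the inverse-classes of `a` and `b`. -/
noncomputable def classFun {S : Type*} (H : SimpleGraph S) (m : S → ℕ∞) (a b : RAACH H m)
    (x : Sstar H m) : ℝ :=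
  (if x.1 = a ∨ x.1 = a⁻¹ then (if b = b⁻¹ then (1:ℝ) else 2) else 0)
    - (if x.1 = b ∨ x.1 = b⁻¹ then (if a = a⁻¹ then (1:ℝ) else 2) else 0)

lemma inv_class_iff {G : Type*} [Group G] (x c : G) :
    (x⁻¹ = c ∨ x⁻¹ = c⁻¹) ↔ (x = c ∨ x = c⁻¹) := by
  constructor
  · rintro (h | h)
    · exact Or.inr (by rw [← h, inv_inv])
    · exact Or.inl (inv_injective h)
  · rintro (h | h)
    · exact Or.inr (by rw [h])
    · exact Or.inl (by rw [h, inv_inv])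

lemma classFun_inv {S : Type*} (H : SimpleGraph S) (m : S → ℕ∞) (a b : RAACH H m)
    (s t : Sstar H m) (hts : t.1 = s.1⁻¹) :
    classFun H m a b t = classFun H m a b s := by
  unfold classFun
  congr 1
  · exact if_congr (by rw [hts]; exact inv_class_iff _ _) rfl rfl
  · exact if_congr (by rw [hts]; exact inv_class_iff _ _) rfl rfl

set_option maxRecDepth 8000 in
lemma class_card {S : Type*} [Fintype S] (H : SimpleGraph S) (m : S → ℕ∞) (a : RAACH H m)
    (ha : a ∈ Sstar H m) :
    ((Finset.univ.filter (fun x : Sstar H m => x.1 = a ∨ x.1 = a⁻¹)).card : ℝ)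
      = if a = a⁻¹ then (1:ℝ) else 2 := by
  have hai : a⁻¹ ∈ Sstar H m := sstar_inv_s12 ha
  have hfe : Finset.univ.filter (fun x : Sstar H m => x.1 = a ∨ x.1 = a⁻¹)
      = {⟨a, ha⟩, ⟨a⁻¹, hai⟩} := by
    ext x
    constructor
    · intro hx
      rcases Finset.mem_filter.mp hx with ⟨-, h1 | h1⟩
      · exact Finset.mem_insert.mpr (Or.inl (Subtype.ext h1))
      · exact Finset.mem_insert.mpr (Or.inr (Finset.mem_singleton.mpr (Subtype.ext h1)))
    · intro hx
      rcases Finset.mem_insert.mp hx with rfl | h1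
      · exact Finset.mem_filter.mpr ⟨Finset.mem_univ _, Or.inl rfl⟩
      · rw [Finset.mem_singleton.mp h1]
        exact Finset.mem_filter.mpr ⟨Finset.mem_univ _, Or.inr rfl⟩
  rw [hfe]
  by_cases h : a = a⁻¹
  · have he : (⟨a⁻¹, hai⟩ : Sstar H m) = ⟨a, ha⟩ := Subtype.ext h.symm
    rw [he, Finset.pair_eq_singleton, Finset.card_singleton, if_pos h]
    norm_num
  · have hne : (⟨a, ha⟩ : Sstar H m) ≠ ⟨a⁻¹, hai⟩ := fun hc => h (congrArg Subtype.val hc)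
    rw [Finset.card_pair hne, if_neg h]
    norm_num

lemma weight_bound_aux {S : Type*} [Fintype S] (H : SimpleGraph S) (m : S → ℕ∞)
    (s t : Sstar H m) (q : ℝ) (hq : 0 ≤ q) (hle : apWeight H m s.1 t.1 ≤ 1) :
    (apWeight H m s.1 t.1 : ℝ) * q ≤ q := by
  have h1 : (apWeight H m s.1 t.1 : ℝ) ≤ 1 := by exact_mod_cast hle
  calc (apWeight H m s.1 t.1 : ℝ) * q ≤ 1 * q := mul_le_mul_of_nonneg_right h1 hq
  _ = q := one_mul q


end Helpers

/-- **Lemma 4.4:** if `R₃ = ∅` and `D ≥ 2`, or `R₃ = S` and `D ≥ 4`, then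
`λ₂(-Δ_{H*}) ≤ D = |S*|`. -/
theorem lambda2_le_D {S : Type} [Fintype S] (H : SimpleGraph S) (m : S → ℕ∞)
    (hm : ∀ s, m s = 2 ∨ m s = 3 ∨ m s = 4 ∨ m s = (⊤ : ℕ∞))
    (h : ({s : S | m s = 3} = ∅ ∧ 2 ≤ Nat.card (Sstar H m)) ∨
         ({s : S | m s = 3} = Set.univ ∧ 4 ≤ Nat.card (Sstar H m))) :
    lambda2 (negLapMat_isHermitian H m).eigenvalues ≤ (Nat.card (Sstar H m) : ℝ) := by
  by_cases htc : ∃ a ∈ Sstar H m, ∃ b ∈ Sstar H m, b ≠ a ∧ b ≠ a⁻¹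
  · obtain ⟨a, ha, b, hb, hba, hbai⟩ := htc
    have hdisj : ∀ x : RAACH H m, (x = a ∨ x = a⁻¹) → (x = b ∨ x = b⁻¹) → False := by
      rintro x (rfl | rfl) (hx | hx)
      · exact hba hx.symm
      · exact hbai (by rw [hx, inv_inv])
      · exact hbai (by rw [← hx])
      · exact hba (inv_injective hx).symm
    apply master_bound H m (classFun H m a b)
    · intro hzero
      have hval := congrFun hzero ⟨a, ha⟩
      have h1 : (a = a ∨ a = a⁻¹) := Or.inl rfl
      have h2 : ¬(a = b ∨ a = b⁻¹) := fun hc => hdisj a h1 hc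
      unfold classFun at hval
      rw [if_pos h1, if_neg h2] at hval
      simp only [Pi.zero_apply, sub_zero] at hval
      split_ifs at hval <;> norm_num at hval
    · unfold classFun
      rw [Finset.sum_sub_distrib, Finset.sum_ite, Finset.sum_const, Finset.sum_const_zero,
        add_zero, Finset.sum_ite, Finset.sum_const, Finset.sum_const_zero, add_zero,
        nsmul_eq_mul, nsmul_eq_mul]
      have hca := class_card H m a ha
      have hcb := class_card H m b hb
      rw [hca, hcb]
      ring
    · intro s t
      rcases apWeight_le_one_or H m s.1 t.1 with hle | ⟨hts, _⟩
      · exact weight_bound_aux H m s t _ (sq_nonneg _) hle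
      · rw [classFun_inv H m a b s t hts]
        simp
  · push_neg at htc
    have hD2 : 2 ≤ Nat.card (Sstar H m) := by
      rcases h with ⟨_, h2⟩ | ⟨_, h4⟩
      · exact h2
      · omega
    have hD2' : 1 < Fintype.card (Sstar H m) := by
      rw [← Nat.card_eq_fintype_card]; omega
    obtain ⟨x, y, hxy⟩ := Fintype.exists_pair_of_one_lt_card hD2'
    have hyx1 : y.1 ≠ x.1 := fun hh => hxy (Subtype.ext hh.symm)
    have hy : y.1 = x.1⁻¹ := htc x.1 x.2 y.1 y.2 hyx1
    have hx_ne : x.1 ≠ x.1⁻¹ := by rw [← hy]; exact fun hh => hyx1 hh.symm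
    have hall : ∀ u : Sstar H m, u.1 = x.1 ∨ u.1 = x.1⁻¹ := by
      intro u
      by_cases hu : u.1 = x.1
      · exact Or.inl hu
      · exact Or.inr (htc x.1 x.2 u.1 u.2 hu)
    have huniv : (Finset.univ : Finset (Sstar H m)) = {x, y} := by
      ext u
      simp only [Finset.mem_univ, Finset.mem_insert, Finset.mem_singleton, true_iff]
      rcases hall u with hu | hu
      · exact Or.inl (Subtype.ext hu)
      · exact Or.inr (Subtype.ext (by rw [hu, hy]))
    rcases h with ⟨hR3, _⟩ | ⟨_, h4⟩
    swap
    · exfalso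
      have hcard2 : Fintype.card (Sstar H m) ≤ 2 := by
        rw [← Finset.card_univ, huniv]
        exact (Finset.card_insert_le _ _).trans (by simp)
      rw [Nat.card_eq_fintype_card] at h4
      omega
    have hordx : orderOf x.1 ≠ 3 := ord_ne_three H m hm hR3 x.1 x.2 hx_ne
    apply master_bound H m (fun u => if u.1 = x.1 then (1:ℝ) else -1)
    · intro hzero
      have hval := congrFun hzero x
      simp at hval
    · rw [huniv, Finset.sum_pair hxy]
      rw [if_pos rfl, if_neg hyx1]
      ring
    · intro s t
      rcases apWeight_le_one_or H m s.1 t.1 with hle | ⟨hts, ho3⟩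
      · exact weight_bound_aux H m s t _ (sq_nonneg _) hle
      · exfalso
        apply hordx
        rcases hall s with hs | hs
        · rw [← hs]; exact ho3
        · rw [← orderOf_inv x.1, ← hs]; exact ho3
end

section
/- Let Φ : V → V' be a surjective 1-Lipschitz map between connected locally finite simple graphs G = (V,E) and G' = (V',E'), and let (m,w) and (m',w') be weighting schemes on G and G' such that (i) m(x) = m'(Φ(x)) for all x ∈ V, and (ii) for all adjacent x', y' ∈ V' and every x ∈ Φ⁻¹(x'), one has w'(x',y') = Σ_{y ∈ Φ⁻¹(y')} w(x,y). Then for every edge {x',y'} ∈ E' and every edge {x,y} ∈ E with Φ(x) = x' and Φ(y) = y', the Lin–Lu–Yau Ollivier Ricci curvatures computed with the respective weighted Laplacians satisfy κ_LLY^{G'}(x',y') ≥ κ_LLY^{G}(x,y). -/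
set_option linter.unusedVariables false

attribute [local instance] Classical.propDecidable

/-- The weighted Laplacian associated to a vertex measure `m` and edge weights `w`. -/
noncomputable def wlap {V : Type*} (m : V → ℝ) (w : V → V → ℝ) (f : V → ℝ) (x : V) : ℝ :=
  (m x)⁻¹ * ∑ᶠ y, w x y * (f y - f x)

/-- `f` is 1-Lipschitz with respect to the graph distance of `G`. -/
def GLip {V : Type*} (G : SimpleGraph V) (f : V → ℝ) : Prop :=
  ∀ u v, |f u - f v| ≤ (G.dist u v : ℝ)

/-- The Lin-Lu-Yau Ollivier Ricci curvature of the edge `{x, y}` with respect to the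
weighted Laplacian of `(m, w)`, in the limit-free formulation of Münch-Wojciechowski. -/
noncomputable def kappaW {V : Type*} (G : SimpleGraph V) (m : V → ℝ) (w : V → V → ℝ)
    (x y : V) : ℝ :=
  sInf {r : ℝ | ∃ f : V → ℝ, GLip G f ∧ f y - f x = 1 ∧ r = wlap m w f x - wlap m w f y}

/-- The weighted Laplacian as a finite sum over the neighbor finset. -/
lemma wlap_eq_sum {V : Type*} (G : SimpleGraph V) (hlf : G.LocallyFinite)
    (m : V → ℝ) (w : V → V → ℝ)
    (hwnonneg : ∀ x y, 0 ≤ w x y) (hwpos : ∀ x y, 0 < w x y ↔ G.Adj x y)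
    (f : V → ℝ) (x : V) :
    wlap m w f x = (m x)⁻¹ * ∑ z ∈ G.neighborFinset x, w x z * (f z - f x) := by
  unfold wlap
  congr 1
  apply finsum_eq_sum_of_support_subset
  intro z hz
  simp only [Function.mem_support] at hz
  have hw : w x z ≠ 0 := fun h => hz (by rw [h]; ring)
  have hpos : 0 < w x z := lt_of_le_of_ne (hwnonneg x z) (Ne.symm hw)
  simpa using (hwpos x z).mp hpos

/-- **Theorem 5.3 (Ollivier part):** under a surjective 1-Lipschitz map with compatible
weighting schemes, the weighted Lin-Lu-Yau Ollivier Ricci curvature of corresponding edges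
does not decrease. -/
theorem kappa_monotone_under_onelipschitz {V V' : Type*} (G : SimpleGraph V) (G' : SimpleGraph V')
    (hconn : G.Connected) (hconn' : G'.Connected)
    (hlf : G.LocallyFinite) (hlf' : G'.LocallyFinite)
    (Φ : V → V') (hsurj : Function.Surjective Φ)
    (hlip : ∀ x y : V, G'.dist (Φ x) (Φ y) ≤ G.dist x y)
    (m : V → ℝ) (w : V → V → ℝ) (m' : V' → ℝ) (w' : V' → V' → ℝ)
    (hm : ∀ x, 0 < m x) (hm' : ∀ x', 0 < m' x')
    (hwsymm : ∀ x y, w x y = w y x) (hwnonneg : ∀ x y, 0 ≤ w x y)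
    (hwpos : ∀ x y, 0 < w x y ↔ G.Adj x y)
    (hw'symm : ∀ x' y', w' x' y' = w' y' x') (hw'nonneg : ∀ x' y', 0 ≤ w' x' y')
    (hw'pos : ∀ x' y', 0 < w' x' y' ↔ G'.Adj x' y')
    (hmm' : ∀ x, m x = m' (Φ x))
    (hww' : ∀ x' y', G'.Adj x' y' → ∀ x, Φ x = x' →
      w' x' y' = ∑ᶠ y ∈ (Φ ⁻¹' {y'}), w x y) :
    ∀ x y : V, G.Adj x y → G'.Adj (Φ x) (Φ y) →
      kappaW G m w x y ≤ kappaW G' m' w' (Φ x) (Φ y) := by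
  intro x y hxy hxy'
  have hwlapG := wlap_eq_sum G hlf m w hwnonneg hwpos
  have hwlapG' := wlap_eq_sum G' hlf' m' w' hw'nonneg hw'pos
  -- the key transfer identity for the Laplacian
  have key : ∀ (f' : V' → ℝ) (a : V),
      wlap m w (fun v => f' (Φ v)) a = wlap m' w' f' (Φ a) := by
    intro f' a
    rw [hwlapG, hwlapG', ← hmm' a]
    congr 1
    have hmaps : ∀ z ∈ G.neighborFinset a,
        Φ z ∈ insert (Φ a) (G'.neighborFinset (Φ a)) := by
      intro z hz
      rw [SimpleGraph.mem_neighborFinset] at hz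
      have h1 : G.dist a z = 1 := SimpleGraph.dist_eq_one_iff_adj.mpr hz
      have h2 : G'.dist (Φ a) (Φ z) ≤ 1 := by rw [← h1]; exact hlip a z
      rcases Nat.le_one_iff_eq_zero_or_eq_one.mp h2 with h | h
      · have := hconn'.dist_eq_zero_iff.mp h
        simp [← this]
      · have : G'.Adj (Φ a) (Φ z) := SimpleGraph.dist_eq_one_iff_adj.mp h
        simp [this]
    rw [← Finset.sum_fiberwise_of_maps_to hmaps (fun z => w a z * (f' (Φ z) - f' (Φ a)))]
    rw [Finset.sum_insert (by simp)]
    have h0 : ∑ z ∈ (G.neighborFinset a).filter (fun z => Φ z = Φ a),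
        w a z * (f' (Φ z) - f' (Φ a)) = 0 := by
      apply Finset.sum_eq_zero
      intro z hz
      rw [Finset.mem_filter] at hz
      rw [hz.2]; ring
    rw [h0, zero_add]
    apply Finset.sum_congr rfl
    intro z' hz'
    rw [SimpleGraph.mem_neighborFinset] at hz'
    have hfib : ∑ z ∈ (G.neighborFinset a).filter (fun z => Φ z = z'),
        w a z * (f' (Φ z) - f' (Φ a))
        = (∑ z ∈ (G.neighborFinset a).filter (fun z => Φ z = z'), w a z)
          * (f' z' - f' (Φ a)) := by
      rw [Finset.sum_mul]
      apply Finset.sum_congr rfl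
      intro z hz
      rw [Finset.mem_filter] at hz
      rw [hz.2]
    rw [hfib]
    congr 1
    rw [hww' (Φ a) z' hz' a rfl]
    refine (finsum_mem_eq_sum_of_inter_support_eq (w a) ?_).symm
    ext z
    simp only [Set.mem_inter_iff, Set.mem_preimage, Set.mem_singleton_iff,
      Function.mem_support, Finset.coe_filter, Set.mem_setOf_eq,
      SimpleGraph.mem_neighborFinset]
    constructor
    · rintro ⟨hΦ, hw⟩
      have hpos : 0 < w a z := lt_of_le_of_ne (hwnonneg a z) (Ne.symm hw)
      exact ⟨⟨(hwpos a z).mp hpos, hΦ⟩, hw⟩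
    · rintro ⟨⟨hadj, hΦ⟩, hw⟩
      exact ⟨hΦ, hw⟩
  apply csInf_le_csInf
  · -- bounded below
    refine ⟨-((m x)⁻¹ * ∑ z ∈ G.neighborFinset x, w x z
        + (m y)⁻¹ * ∑ z ∈ G.neighborFinset y, w y z), ?_⟩
    rintro r ⟨f, hf, hfyx, rfl⟩
    have hbound : ∀ a : V, |wlap m w f a| ≤ (m a)⁻¹ * ∑ z ∈ G.neighborFinset a, w a z := by
      intro a
      rw [hwlapG]
      rw [abs_mul, abs_inv, abs_of_pos (hm a)]
      gcongr
      · exact le_of_lt (inv_pos.mpr (hm a))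
      calc |∑ z ∈ G.neighborFinset a, w a z * (f z - f a)|
          ≤ ∑ z ∈ G.neighborFinset a, |w a z * (f z - f a)| := Finset.abs_sum_le_sum_abs _ _
        _ ≤ ∑ z ∈ G.neighborFinset a, w a z := by
            apply Finset.sum_le_sum
            intro z hz
            rw [SimpleGraph.mem_neighborFinset] at hz
            rw [abs_mul, abs_of_nonneg (hwnonneg a z)]
            have hd : G.dist a z = 1 := SimpleGraph.dist_eq_one_iff_adj.mpr hz
            have hfz := hf z a
            have hdz : G.dist z a = 1 := by rw [SimpleGraph.dist_comm]; exact hd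
            rw [hdz] at hfz
            have h1 : |f z - f a| ≤ 1 := by exact_mod_cast hfz
            exact mul_le_of_le_one_right (hwnonneg a z) h1
    have h1 := abs_le.mp (hbound x)
    have h2 := abs_le.mp (hbound y)
    linarith [h1.1, h2.2]
  · -- the G' set is nonempty
    refine ⟨wlap m' w' (fun v => (G'.dist (Φ x) v : ℝ)) (Φ x)
        - wlap m' w' (fun v => (G'.dist (Φ x) v : ℝ)) (Φ y),
      (fun v => (G'.dist (Φ x) v : ℝ)), ?_, ?_, rfl⟩
    · intro u v
      rw [abs_sub_le_iff]
      constructor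
      · have h := hconn'.dist_triangle (u := Φ x) (v := v) (w := u)
        have h2 : (G'.dist (Φ x) u : ℝ) ≤ G'.dist (Φ x) v + G'.dist v u := by exact_mod_cast h
        have h3 : G'.dist v u = G'.dist u v := SimpleGraph.dist_comm
        rw [h3] at h2
        linarith
      · have h := hconn'.dist_triangle (u := Φ x) (v := u) (w := v)
        have h2 : (G'.dist (Φ x) v : ℝ) ≤ G'.dist (Φ x) u + G'.dist u v := by exact_mod_cast h
        linarith
    · have h1 : G'.dist (Φ x) (Φ y) = 1 := SimpleGraph.dist_eq_one_iff_adj.mpr hxy'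
      have h0 : G'.dist (Φ x) (Φ x) = 0 := by simp
      show (G'.dist (Φ x) (Φ y) : ℝ) - (G'.dist (Φ x) (Φ x) : ℝ) = 1
      rw [h1, h0]
      norm_num
  · -- inclusion of the sets
    rintro r ⟨f', hf', hf'yx, rfl⟩
    refine ⟨fun v => f' (Φ v), ?_, ?_, ?_⟩
    · intro u v
      have h1 := hf' (Φ u) (Φ v)
      have h2 : (G'.dist (Φ u) (Φ v) : ℝ) ≤ (G.dist u v : ℝ) := by
        exact_mod_cast hlip u v
      exact h1.trans h2
    · exact hf'yx
    · rw [key f' x, key f' y]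
end
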